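/- arXiv:1910.09201 — 2 statements merged into one kernel-verified Lean document; each statement's English description precedes it below -/
import Mathlib

section
/- For n ≥ 1 and 1 ≤ p ≤ ∞, the Sobolev space W^n_p([a,b];ℂ) on a compact interval [a,b] is closed under pointwise multiplication; moreover there is a constant C such that ‖fg‖_{n,p} ≤ C‖f‖_{n,p}‖g‖_{n,p} for all f, g ∈ W^n_p([a,b];ℂ), i.e., W^n_p([a,b];ℂ) is a Banach algebra (up to renorming). -/
open MeasureTheory Set Filter Topology Matrix
open scoped ENNReal NNReal

noncomputable section

/-- Membership in the Sobolev space `W^n_p([a,b]; E)`: for `n = 0` this is `L_p`,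
and for `n + 1` the function is absolutely continuous on `[a,b]` (it is the integral of
its derivative `g`) with derivative in `W^n_p`. -/
def MemW {E : Type*} [NormedAddCommGroup E] [NormedSpace ℝ E] [CompleteSpace E]
    (p : ℝ≥0∞) (a b : ℝ) : ℕ → (ℝ → E) → Prop
  | 0, f => MemLp f p (volume.restrict (Icc a b))
  | n + 1, f => ∃ g : ℝ → E,
      (∀ t ∈ Icc a b, f t = f a + ∫ s in a..t, g s) ∧ MemW p a b n g

/-- The `W^n_p([a,b])` norm: the sum of the `L_p([a,b])` norms of the derivatives of
order `0,…,n` (computed via `iteratedDerivWithin`, which agrees a.e. with the weak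
derivatives for Sobolev functions). -/
def WNorm {E : Type*} [NormedAddCommGroup E] [NormedSpace ℝ E]
    (p : ℝ≥0∞) (a b : ℝ) (n : ℕ) (f : ℝ → E) : ℝ :=
  ∑ k ∈ Finset.range (n + 1),
    (eLpNorm (iteratedDerivWithin k f (Icc a b)) p (volume.restrict (Icc a b))).toReal

namespace SobAux

open intervalIntegral

variable {p : ℝ≥0∞} {a b : ℝ}

/-- `f` is the primitive of `u` on `[a,b]`. -/
def Rep (a b : ℝ) (f u : ℝ → ℂ) : Prop :=
  ∀ t ∈ Icc a b, f t = f a + ∫ s in a..t, u s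

theorem finite_restrict (a b : ℝ) : IsFiniteMeasure ((volume : Measure ℝ).restrict (Icc a b)) :=
  ⟨by rw [Measure.restrict_apply_univ]; exact measure_Icc_lt_top⟩

theorem memLp_integrableOn (hp : 1 ≤ p) {h : ℝ → ℂ}
    (hh : MemLp h p (volume.restrict (Icc a b))) : IntegrableOn h (Icc a b) volume := by
  have := finite_restrict a b
  exact hh.integrable hp

theorem II {u : ℝ → ℂ} (hu : IntegrableOn u (Icc a b) volume) {t : ℝ} (ht : t ∈ Icc a b) :
    IntervalIntegrable u volume a t :=
  (intervalIntegrable_iff_integrableOn_Icc_of_le ht.1).2 (hu.mono_set (Icc_subset_Icc le_rfl ht.2))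

theorem Rep.continuousOn {f u : ℝ → ℂ} (hab : a ≤ b) (hu : IntegrableOn u (Icc a b) volume)
    (hf : Rep a b f u) : ContinuousOn f (Icc a b) := by
  have h1 : ContinuousOn (fun t => f a + ∫ s in a..t, u s) (Icc a b) := by
    refine continuousOn_const.add ?_
    have := continuousOn_primitive_interval (μ := volume) (a := a) (b := b)
      (by rwa [uIcc_of_le hab])
    rwa [uIcc_of_le hab] at this
  exact h1.congr hf

theorem contOn_memLp {f : ℝ → ℂ}
    (hf : ContinuousOn f (Icc a b)) : MemLp f p (volume.restrict (Icc a b)) := by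
  have := finite_restrict a b
  obtain ⟨C, hC⟩ := isCompact_Icc.exists_bound_of_continuousOn hf
  exact MemLp.of_bound (hf.aestronglyMeasurable measurableSet_Icc) C
    ((ae_restrict_iff' measurableSet_Icc).2 (Eventually.of_forall hC))

theorem memW_memLp (hab : a ≤ b) (hp : 1 ≤ p) {n : ℕ} {f : ℝ → ℂ}
    (hf : MemW p a b n f) : MemLp f p (volume.restrict (Icc a b)) := by
  induction n generalizing f with
  | zero => exact hf
  | succ n ih =>
    obtain ⟨u, hrep, hu⟩ := hf
    exact contOn_memLp (Rep.continuousOn hab (memLp_integrableOn hp (ih hu)) hrep)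

theorem memW_continuousOn (hab : a ≤ b) (hp : 1 ≤ p) {n : ℕ} {f : ℝ → ℂ}
    (hf : MemW p a b (n + 1) f) : ContinuousOn f (Icc a b) := by
  obtain ⟨u, hrep, hu⟩ := hf
  exact Rep.continuousOn hab (memLp_integrableOn hp (memW_memLp hab hp hu)) hrep

theorem memW_mono (hab : a ≤ b) (hp : 1 ≤ p) {n : ℕ} {f : ℝ → ℂ}
    (hf : MemW p a b (n + 1) f) : MemW p a b n f := by
  induction n generalizing f with
  | zero => exact memW_memLp hab hp hf
  | succ n ih =>
    obtain ⟨u, hrep, hu⟩ := hf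
    exact ⟨u, hrep, ih hu⟩

theorem memW_add (hab : a ≤ b) (hp : 1 ≤ p) {n : ℕ} {f g : ℝ → ℂ}
    (hf : MemW p a b n f) (hg : MemW p a b n g) : MemW p a b n (fun t => f t + g t) := by
  induction n generalizing f g with
  | zero => exact hf.add hg
  | succ n ih =>
    obtain ⟨u, hfrep, hu⟩ := hf
    obtain ⟨v, hgrep, hv⟩ := hg
    refine ⟨fun t => u t + v t, fun t ht => ?_, ih hu hv⟩
    have hui : IntervalIntegrable u volume a t := II (memLp_integrableOn hp (memW_memLp hab hp hu)) ht
    have hvi : IntervalIntegrable v volume a t := II (memLp_integrableOn hp (memW_memLp hab hp hv)) ht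
    show f t + g t = f a + g a + _
    rw [hfrep t ht, hgrep t ht, intervalIntegral.integral_add hui hvi]
    ring

theorem ae_mem_Ioo (hab : a < b) :
    ∀ᵐ x ∂((volume : Measure ℝ).restrict (Icc a b)), x ∈ Ioo a b := by
  rw [ae_iff]
  have hset : {x | ¬ x ∈ Ioo a b} = (Ioo a b)ᶜ := rfl
  rw [hset, Measure.restrict_apply (MeasurableSet.compl measurableSet_Ioo)]
  refine measure_mono_null (fun x hx => ?_) (Set.Finite.measure_zero
    ((Set.finite_singleton b).insert a) volume)
  have h1 : ¬ x ∈ Ioo a b := hx.1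
  have h2 : x ∈ Icc a b := hx.2
  rw [mem_Ioo, not_and_or, not_lt, not_lt] at h1
  rcases h1 with h | h
  · exact Or.inl (le_antisymm h h2.1)
  · exact Or.inr (le_antisymm h2.2 h)

theorem Rep.ae_hasDerivAt (hab : a < b) {f u : ℝ → ℂ} (hu : IntegrableOn u (Icc a b) volume)
    (hf : Rep a b f u) :
    ∀ᵐ x ∂((volume : Measure ℝ).restrict (Icc a b)), x ∈ Ioo a b ∧ HasDerivAt f (u x) x := by
  set w : ℝ → ℂ := (Ioo a b).indicator u with hw
  have hwint : Integrable w volume :=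
    (hu.mono_set Ioo_subset_Icc_self).integrable_indicator measurableSet_Ioo
  have hleb := IsUnifLocDoublingMeasure.ae_tendsto_average_norm_sub
      (μ := (volume : Measure ℝ)) hwint.locallyIntegrable 1
  filter_upwards [ae_mem_Ioo hab, ae_restrict_of_ae hleb] with x hxIoo hx
  refine ⟨hxIoo, ?_⟩
  have hxI : x ∈ Icc a b := Ioo_subset_Icc_self hxIoo
  set F : ℝ → ℂ := fun t => f a + ∫ s in a..t, u s with hF
  have hFf : F =ᶠ[𝓝 x] f := by
    filter_upwards [Ioo_mem_nhds hxIoo.1 hxIoo.2] with t ht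
    exact (hf t (Ioo_subset_Icc_self ht)).symm
  rw [← hFf.hasDerivAt_iff]
  rw [hasDerivAt_iff_tendsto_slope]
  have hδ : Tendsto (fun t : ℝ => |t - x| / 2) (𝓝[≠] x) (𝓝[>] (0:ℝ)) := by
    rw [tendsto_nhdsWithin_iff]
    constructor
    · refine Tendsto.mono_left ?_ nhdsWithin_le_nhds
      have hc : Continuous fun t : ℝ => |t - x| / 2 :=
        (continuous_abs.comp (continuous_id.sub continuous_const)).div_const 2
      simpa using hc.tendsto x
    · filter_upwards [self_mem_nhdsWithin] with t ht
      have hne : (t : ℝ) ≠ x := ht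
      have : (0:ℝ) < |t - x| := abs_pos.2 (sub_ne_zero.2 hne)
      exact mem_Ioi.2 (by linarith)
  have hmem : ∀ᶠ t in 𝓝[≠] x, x ∈ Metric.closedBall ((x + t)/2) (1 * (|t - x|/2)) := by
    refine Eventually.of_forall fun t => ?_
    rw [Metric.mem_closedBall, one_mul, Real.dist_eq]
    have h1 : x - (x + t)/2 = (x - t)/2 := by ring
    rw [h1, abs_div, abs_sub_comm x t]
    simp [abs_of_nonneg]
  have havg := hx (fun t => (x + t)/2) (fun t => |t - x|/2) hδ hmem
  rw [show (𝓝 (u x)) = 𝓝 (u x) from rfl]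
  have hslope : Tendsto (fun t => slope F x t - u x) (𝓝[≠] x) (𝓝 0) := by
    refine squeeze_zero_norm' ?_ havg
    filter_upwards [self_mem_nhdsWithin,
      nhdsWithin_le_nhds (Ioo_mem_nhds hxIoo.1 hxIoo.2)] with t htne htIoo
    have htI : t ∈ Icc a b := Ioo_subset_Icc_self htIoo
    have hnex : (t : ℝ) ≠ x := htne
    have hne : t - x ≠ 0 := sub_ne_zero.2 hnex
    have hii : IntervalIntegrable u volume x t :=
      (intervalIntegrable_iff (μ := volume) (a := x) (b := t)).2
        ((hu.mono_set (ordConnected_Icc.uIcc_subset hxI htI |>.trans' uIoc_subset_uIcc)).mono_set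
          (by exact fun y hy => hy))
    have h1 : F t - F x = ∫ s in x..t, u s := by
      simp only [hF]
      rw [add_sub_add_left_eq_sub]
      exact integral_interval_sub_left (II hu htI) (II hu hxI)
    have h2 : slope F x t - u x = (t - x)⁻¹ • (∫ s in x..t, (u s - u x)) := by
      rw [slope_def_module, h1,
        intervalIntegral.integral_sub hii (intervalIntegrable_const),
        intervalIntegral.integral_const, smul_sub, smul_smul,
        inv_mul_cancel₀ hne, one_smul]
    have hball : Metric.closedBall ((x+t)/2) (|t-x|/2) = uIcc x t := by
      rw [Real.closedBall_eq_Icc]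
      rcases le_total x t with h | h
      · rw [uIcc_of_le h, abs_of_nonneg (by linarith)]
        congr 1 <;> ring
      · rw [uIcc_of_ge h, abs_of_nonpos (by linarith)]
        congr 1 <;> ring
    have hsubIoo : Set.uIoc x t ⊆ Ioo a b :=
      uIoc_subset_uIcc.trans (ordConnected_Ioo.uIcc_subset hxIoo htIoo)
    have key : ‖∫ s in x..t, (u s - u x)‖ ≤
        ∫ y in Metric.closedBall ((x+t)/2) (|t-x|/2), ‖w y - w x‖ := by
      refine (intervalIntegral.norm_integral_le_integral_norm_uIoc).trans ?_
      have heq : ∫ s in Set.uIoc x t, ‖u s - u x‖ = ∫ s in Set.uIoc x t, ‖w s - w x‖ := by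
        refine setIntegral_congr_fun measurableSet_uIoc fun s hs => ?_
        rw [hw, indicator_of_mem (hsubIoo hs), indicator_of_mem hxIoo]
      rw [heq]
      refine setIntegral_mono_set ?_ (Eventually.of_forall fun y => norm_nonneg _) ?_
      · exact (hwint.integrableOn.sub (integrableOn_const
          measure_closedBall_lt_top.ne)).norm
      · rw [hball]
        exact HasSubset.Subset.eventuallyLE uIoc_subset_uIcc
    have hvol : ((volume : Measure ℝ) (Metric.closedBall ((x+t)/2) (|t-x|/2))).toReal
        = |t - x| := by
      rw [Real.volume_closedBall, ENNReal.toReal_ofReal (by positivity)]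
      ring
    rw [h2, norm_smul, norm_inv, Real.norm_eq_abs, setAverage_eq, measureReal_def, hvol, smul_eq_mul]
    exact mul_le_mul_of_nonneg_left key (by positivity)
  have := Filter.Tendsto.add_const (u x) hslope
  simpa using this

theorem iterDeriv_Icc_eq_Ioo {m : ℕ} {h : ℝ → ℂ} {x : ℝ} (hx : x ∈ Ioo a b) :
    iteratedDerivWithin m h (Icc a b) x = iteratedDerivWithin m h (Ioo a b) x := by
  rw [iteratedDerivWithin_eq_iteratedFDerivWithin, iteratedDerivWithin_eq_iteratedFDerivWithin]
  rw [show (Ioo a b) = Icc a b ∩ Ioo a b from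
    (inter_eq_self_of_subset_right Ioo_subset_Icc_self).symm]
  rw [iteratedFDerivWithin_inter_open isOpen_Ioo hx]

theorem hasDerivAt_congr_nbhd {f F : ℝ → ℂ} {x : ℝ} (hx : x ∈ Ioo a b)
    (heq : ∀ t ∈ Icc a b, f t = F t) {d : ℂ} (hF : HasDerivAt F d x) : HasDerivAt f d x := by
  have hFf : F =ᶠ[𝓝 x] f := by
    filter_upwards [Ioo_mem_nhds hx.1 hx.2] with t ht
    exact (heq t (Ioo_subset_Icc_self ht)).symm
  exact hFf.hasDerivAt_iff.1 hF

theorem Rep.hasDerivAt_of_cont {f u : ℝ → ℂ} (hu : IntegrableOn u (Icc a b) volume)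
    (hucont : ContinuousOn u (Icc a b)) (hf : Rep a b f u) :
    ∀ x ∈ Ioo a b, HasDerivAt f (u x) x := by
  intro x hx
  have hxI := Ioo_subset_Icc_self hx
  have hca : ContinuousAt u x := hucont.continuousAt (Icc_mem_nhds hx.1 hx.2)
  have hmeas : StronglyMeasurableAtFilter u (𝓝 x) volume :=
    ⟨Ioo a b, Ioo_mem_nhds hx.1 hx.2, (hu.mono_set Ioo_subset_Icc_self).aestronglyMeasurable⟩
  have h := intervalIntegral.integral_hasDerivAt_right (II hu hxI) hmeas hca
  exact hasDerivAt_congr_nbhd hx hf (h.const_add (f a))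

theorem shift_ae (hab : a < b) (hp : 1 ≤ p) {n : ℕ} {f u : ℝ → ℂ} (hf : Rep a b f u)
    (hu : MemW p a b n u) {k : ℕ} (hk : k ≤ n) :
    iteratedDerivWithin (k + 1) f (Icc a b)
      =ᵐ[volume.restrict (Icc a b)] iteratedDerivWithin k u (Icc a b) := by
  have huint : IntegrableOn u (Icc a b) volume := memLp_integrableOn hp (memW_memLp hab.le hp hu)
  rcases Nat.eq_zero_or_pos n with hn | hn
  · subst hn
    obtain rfl : k = 0 := Nat.le_zero.1 hk
    filter_upwards [Rep.ae_hasDerivAt hab huint hf] with x hx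
    rw [iteratedDerivWithin_one,
      iteratedDerivWithin_zero]
    exact hx.2.hasDerivWithinAt.derivWithin ((uniqueDiffOn_Icc hab) x (Ioo_subset_Icc_self hx.1))
  · have hucont : ContinuousOn u (Icc a b) := by
      obtain ⟨n', rfl⟩ : ∃ n', n = n' + 1 := ⟨n - 1, (Nat.succ_pred_eq_of_pos hn).symm⟩
      exact memW_continuousOn hab.le hp hu
    have hDf := Rep.hasDerivAt_of_cont huint hucont hf
    have hEq : EqOn (derivWithin f (Ioo a b)) u (Ioo a b) := fun x hx =>
      (hDf x hx).hasDerivWithinAt.derivWithin (isOpen_Ioo.uniqueDiffOn x hx)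
    filter_upwards [ae_mem_Ioo hab] with x hx
    rw [iterDeriv_Icc_eq_Ioo hx, iterDeriv_Icc_eq_Ioo hx,
      iteratedDerivWithin_succ']
    exact iteratedDerivWithin_congr hEq hx

theorem normEq (hab : a < b) (hp : 1 ≤ p) {n : ℕ} {f u : ℝ → ℂ} (hf : Rep a b f u)
    (hu : MemW p a b n u) :
    WNorm p a b (n + 1) f
      = (eLpNorm f p (volume.restrict (Icc a b))).toReal + WNorm p a b n u := by
  unfold WNorm
  rw [Finset.sum_range_succ', iteratedDerivWithin_zero, add_comm]
  congr 1
  refine Finset.sum_congr rfl fun k hk => ?_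
  rw [eLpNorm_congr_ae (shift_ae hab hp hf hu (Nat.lt_succ_iff.1 (Finset.mem_range.1 hk)))]

theorem wnorm_nonneg (n : ℕ) (f : ℝ → ℂ) : 0 ≤ WNorm p a b n f :=
  Finset.sum_nonneg fun _ _ => ENNReal.toReal_nonneg

theorem wnorm_mono {n m : ℕ} (h : n ≤ m) (f : ℝ → ℂ) : WNorm p a b n f ≤ WNorm p a b m f :=
  Finset.sum_le_sum_of_subset_of_nonneg (Finset.range_subset_range.2 (by omega))
    (fun _ _ _ => ENNReal.toReal_nonneg)

theorem elp_le_wnorm {n : ℕ} (f : ℝ → ℂ) :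
    (eLpNorm f p (volume.restrict (Icc a b))).toReal ≤ WNorm p a b n f := by
  have h := Finset.single_le_sum
    (f := fun k =>
      (eLpNorm (iteratedDerivWithin k f (Icc a b)) p (volume.restrict (Icc a b))).toReal)
    (fun _ _ => ENNReal.toReal_nonneg) (Finset.mem_range.2 (Nat.succ_pos n))
  simp only [iteratedDerivWithin_zero] at h
  exact h

theorem elp_add_le (hp : 1 ≤ p) {f g : ℝ → ℂ} (hf : MemLp f p (volume.restrict (Icc a b)))
    (hg : MemLp g p (volume.restrict (Icc a b))) :
    (eLpNorm (fun t => f t + g t) p (volume.restrict (Icc a b))).toReal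
      ≤ (eLpNorm f p (volume.restrict (Icc a b))).toReal
        + (eLpNorm g p (volume.restrict (Icc a b))).toReal := by
  have h1 := eLpNorm_add_le hf.aestronglyMeasurable hg.aestronglyMeasurable hp
  rw [← ENNReal.toReal_add hf.eLpNorm_ne_top hg.eLpNorm_ne_top]
  exact ENNReal.toReal_mono (ENNReal.add_ne_top.2 ⟨hf.eLpNorm_ne_top, hg.eLpNorm_ne_top⟩) h1

theorem Rep.add (hab : a ≤ b) {f g u v : ℝ → ℂ} (hu : IntegrableOn u (Icc a b) volume)
    (hv : IntegrableOn v (Icc a b) volume) (hf : Rep a b f u) (hg : Rep a b g v) :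
    Rep a b (fun t => f t + g t) (fun t => u t + v t) := by
  intro t ht
  show f t + g t = f a + g a + _
  rw [hf t ht, hg t ht, intervalIntegral.integral_add (II hu ht) (II hv ht)]
  ring

theorem wnorm_zero_eq (f : ℝ → ℂ) :
    WNorm p a b 0 f = (eLpNorm f p (volume.restrict (Icc a b))).toReal := by
  simp [WNorm]

theorem wnorm_add_le (hab : a < b) (hp : 1 ≤ p) {n : ℕ} {f g : ℝ → ℂ}
    (hf : MemW p a b n f) (hg : MemW p a b n g) :
    WNorm p a b n (fun t => f t + g t) ≤ WNorm p a b n f + WNorm p a b n g := by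
  induction n generalizing f g with
  | zero =>
    rw [wnorm_zero_eq, wnorm_zero_eq, wnorm_zero_eq]
    exact elp_add_le hp hf hg
  | succ n ih =>
    have hf' := hf
    have hg' := hg
    obtain ⟨u, hfrep, hu⟩ := hf
    obtain ⟨v, hgrep, hv⟩ := hg
    have hui := memLp_integrableOn hp (memW_memLp hab.le hp hu)
    have hvi := memLp_integrableOn hp (memW_memLp hab.le hp hv)
    have hsum : Rep a b (fun t => f t + g t) (fun t => u t + v t) :=
      Rep.add hab.le hui hvi hfrep hgrep
    have hmem : MemW p a b n (fun t => u t + v t) := memW_add hab.le hp hu hv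
    rw [normEq hab hp hsum hmem, normEq hab hp hfrep hu, normEq hab hp hgrep hv]
    have t1 := elp_add_le hp (memW_memLp hab.le hp hf') (memW_memLp hab.le hp hg')
    have t2 := ih hu hv
    linarith

/-- The constant in the `L¹ ≤ L^p` comparison. -/
def Jc (p : ℝ≥0∞) (a b : ℝ) : ℝ :=
  (((volume : Measure ℝ) (Icc a b)) ^ (1 - 1/p.toReal)).toReal

theorem Jc_nonneg : 0 ≤ Jc p a b := ENNReal.toReal_nonneg

theorem integral_norm_le (hp : 1 ≤ p) {h : ℝ → ℂ}
    (hh : MemLp h p (volume.restrict (Icc a b))) :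
    ∫ t in Icc a b, ‖h t‖ ≤ Jc p a b * (eLpNorm h p (volume.restrict (Icc a b))).toReal := by
  have hint : IntegrableOn h (Icc a b) volume := memLp_integrableOn hp hh
  have h1 : ∫ t in Icc a b, ‖h t‖
      = (eLpNorm h 1 (volume.restrict (Icc a b))).toReal := by
    rw [eLpNorm_one_eq_lintegral_enorm,
      integral_norm_eq_lintegral_enorm hh.aestronglyMeasurable]
  have h2 := eLpNorm_le_eLpNorm_mul_rpow_measure_univ hp hh.aestronglyMeasurable
  rw [Measure.restrict_apply_univ] at h2
  have h3 : (1 : ℝ≥0∞).toReal = 1 := ENNReal.toReal_one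
  rw [h1]
  have hfin : eLpNorm h p (volume.restrict (Icc a b))
      * (volume : Measure ℝ) (Icc a b) ^ (1/(1:ℝ≥0∞).toReal - 1/p.toReal) ≠ ⊤ := by
    refine ENNReal.mul_ne_top hh.eLpNorm_ne_top ?_
    refine ENNReal.rpow_ne_top_of_nonneg ?_ measure_Icc_lt_top.ne
    rw [h3]
    rcases eq_or_ne p ∞ with rfl | hptop
    · simp
    · have h4 : 1 ≤ p.toReal := ENNReal.toReal_one ▸ ENNReal.toReal_mono hptop hp
      have : 1/p.toReal ≤ 1 := by rw [div_le_one (by linarith)]; linarith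
      linarith
  calc (eLpNorm h 1 (volume.restrict (Icc a b))).toReal
      ≤ (eLpNorm h p (volume.restrict (Icc a b))
          * (volume : Measure ℝ) (Icc a b) ^ (1/(1:ℝ≥0∞).toReal - 1/p.toReal)).toReal :=
        ENNReal.toReal_mono hfin h2
    _ = Jc p a b * (eLpNorm h p (volume.restrict (Icc a b))).toReal := by
        rw [ENNReal.toReal_mul, Jc, h3, one_div (1:ℝ), inv_one, mul_comm]

theorem sup_bound (hab : a < b) (hp : 1 ≤ p) {f u : ℝ → ℂ}
    (hu : IntegrableOn u (Icc a b) volume) (hulp : MemLp u p (volume.restrict (Icc a b)))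
    (hf : Rep a b f u) : ∀ t ∈ Icc a b,
    ‖f t‖ ≤ ((b - a)⁻¹ + 1) * Jc p a b *
      ((eLpNorm f p (volume.restrict (Icc a b))).toReal
        + (eLpNorm u p (volume.restrict (Icc a b))).toReal) := by
  intro t ht
  have hba : (0:ℝ) < b - a := by linarith
  have hfc : ContinuousOn f (Icc a b) := Rep.continuousOn hab.le hu hf
  have hflp : MemLp f p (volume.restrict (Icc a b)) := contOn_memLp hfc
  have hfint : IntegrableOn f (Icc a b) volume := memLp_integrableOn hp hflp
  set Cu : ℝ := ∫ s in Icc a b, ‖u s‖ with hCu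
  have hCu0 : 0 ≤ Cu := setIntegral_nonneg measurableSet_Icc fun s _ => norm_nonneg _
  have hptw : ∀ s ∈ Icc a b, ‖f t‖ ≤ ‖f s‖ + Cu := by
    intro s hs
    have hfts : f t = f s + ∫ r in s..t, u r := by
      rw [hf t ht, hf s hs, ← integral_interval_sub_left (II hu ht) (II hu hs)]
      ring
    rw [hfts]
    refine (norm_add_le _ _).trans ?_
    gcongr
    refine (intervalIntegral.norm_integral_le_integral_norm_uIoc).trans ?_
    refine setIntegral_mono_set hu.norm (Eventually.of_forall fun s => norm_nonneg _) ?_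
    exact HasSubset.Subset.eventuallyLE
      (uIoc_subset_uIcc.trans (ordConnected_Icc.uIcc_subset hs ht))
  have key : (b - a) * ‖f t‖ ≤ (∫ s in Icc a b, ‖f s‖) + (b - a) * Cu := by
    have h1 : ∫ (_ : ℝ) in Icc a b, ‖f t‖ = (b - a) * ‖f t‖ := by
      rw [setIntegral_const, measureReal_def, Real.volume_Icc, ENNReal.toReal_ofReal hba.le, smul_eq_mul]
    have h2 : ∫ (_ : ℝ) in Icc a b, Cu = (b - a) * Cu := by
      rw [setIntegral_const, measureReal_def, Real.volume_Icc, ENNReal.toReal_ofReal hba.le, smul_eq_mul]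
    have h3 : ∫ s in Icc a b, ‖f t‖ ≤ ∫ s in Icc a b, (‖f s‖ + Cu) := by
      refine setIntegral_mono_on (integrableOn_const measure_Icc_lt_top.ne)
        (hfint.norm.add (integrableOn_const measure_Icc_lt_top.ne))
        measurableSet_Icc hptw
    rw [h1] at h3
    rw [integral_add hfint.norm (integrableOn_const measure_Icc_lt_top.ne)] at h3
    rw [h2] at h3
    exact h3
  have hA := integral_norm_le hp hflp
  have hB := integral_norm_le hp hulp
  set X := (eLpNorm f p (volume.restrict (Icc a b))).toReal with hX
  set Y := (eLpNorm u p (volume.restrict (Icc a b))).toReal with hY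
  have hX0 : 0 ≤ X := ENNReal.toReal_nonneg
  have hY0 : 0 ≤ Y := ENNReal.toReal_nonneg
  have hJ0 : 0 ≤ Jc p a b := Jc_nonneg
  have hinv : (0:ℝ) < (b - a)⁻¹ := by positivity
  have hcancel : (b - a)⁻¹ * (b - a) = 1 := inv_mul_cancel₀ hba.ne'
  nlinarith [mul_le_mul_of_nonneg_left key hinv.le, hA, hB,
    mul_le_mul_of_nonneg_left hA hinv.le, mul_nonneg hJ0 hX0, mul_nonneg hJ0 hY0,
    mul_nonneg (mul_nonneg hinv.le hJ0) hX0, mul_nonneg (mul_nonneg hinv.le hJ0) hY0]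

theorem memLp_mul_of_bound {φ ψ : ℝ → ℂ}
    (hφm : AEStronglyMeasurable φ (volume.restrict (Icc a b)))
    (hψ : MemLp ψ p (volume.restrict (Icc a b))) {M : ℝ} (hM0 : 0 ≤ M)
    (hM : ∀ t ∈ Icc a b, ‖φ t‖ ≤ M) :
    MemLp (fun t => φ t * ψ t) p (volume.restrict (Icc a b)) ∧
    (eLpNorm (fun t => φ t * ψ t) p (volume.restrict (Icc a b))).toReal
      ≤ M * (eLpNorm ψ p (volume.restrict (Icc a b))).toReal := by
  have hMc : ‖(M : ℂ)‖ = M := by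
    rw [Complex.norm_real, Real.norm_eq_abs, abs_of_nonneg hM0]
  have hbound : ∀ᵐ t ∂(volume.restrict (Icc a b)), ‖φ t * ψ t‖ ≤ ‖(M : ℂ) * ψ t‖ := by
    filter_upwards [(ae_restrict_iff' measurableSet_Icc).2 (Eventually.of_forall hM)] with t hMt
    rw [norm_mul, norm_mul, hMc]
    exact mul_le_mul_of_nonneg_right hMt (norm_nonneg _)
  have h1 : eLpNorm (fun t => φ t * ψ t) p (volume.restrict (Icc a b))
      ≤ eLpNorm (fun t => (M : ℂ) * ψ t) p (volume.restrict (Icc a b)) :=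
    eLpNorm_mono_ae hbound
  have h2 : eLpNorm (fun t => (M : ℂ) * ψ t) p (volume.restrict (Icc a b))
      = ‖(M : ℂ)‖₊ * eLpNorm ψ p (volume.restrict (Icc a b)) := by
    have := eLpNorm_const_smul (μ := volume.restrict (Icc a b)) (M : ℂ) ψ p
    rw [enorm_eq_nnnorm] at this
    exact this
  have h3 : eLpNorm (fun t => φ t * ψ t) p (volume.restrict (Icc a b))
      ≤ ‖(M : ℂ)‖₊ * eLpNorm ψ p (volume.restrict (Icc a b)) := h1.trans h2.le
  have hfin : (‖(M : ℂ)‖₊ : ℝ≥0∞) * eLpNorm ψ p (volume.restrict (Icc a b)) ≠ ⊤ :=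
    ENNReal.mul_ne_top ENNReal.coe_ne_top hψ.eLpNorm_ne_top
  constructor
  · exact ⟨hφm.mul hψ.aestronglyMeasurable, lt_of_le_of_lt h3 (lt_top_iff_ne_top.2 hfin)⟩
  · refine (ENNReal.toReal_mono hfin h3).trans ?_
    rw [ENNReal.toReal_mul, ENNReal.coe_toReal, coe_nnnorm, hMc]

theorem primitive_mul (hab : a ≤ b) {u v : ℝ → ℂ}
    (hu : IntegrableOn u (Icc a b) volume) (hv : IntegrableOn v (Icc a b) volume)
    {t : ℝ} (ht : t ∈ Icc a b) :
    (∫ s in a..t, u s) * (∫ s in a..t, v s)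
      = ∫ s in a..t, (u s * (∫ r in a..s, v r) + (∫ r in a..s, u r) * v s) := by
  have hat : a ≤ t := ht.1
  set I : Set ℝ := Ioc a t with hI
  have hIsub : I ⊆ Icc a b := fun y hy => ⟨hy.1.le, hy.2.trans ht.2⟩
  have hmI : MeasurableSet I := measurableSet_Ioc
  have huI : Integrable u (volume.restrict I) := hu.mono_set hIsub
  have hvI : Integrable v (volume.restrict I) := hv.mono_set hIsub
  set W : ℝ × ℝ → ℂ := fun q => u q.1 * v q.2 with hW
  set H : ℝ × ℝ → ℂ := ({q : ℝ × ℝ | q.2 ≤ q.1}).indicator W with hH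
  set K : ℝ × ℝ → ℂ := ({q : ℝ × ℝ | q.1 < q.2}).indicator W with hK
  set U : ℝ → ℂ := fun s => ∫ r in Ioc a s, u r with hU
  set V : ℝ → ℂ := fun s => ∫ r in Ioc a s, v r with hV
  -- pointwise descriptions of slices
  have hHslice : ∀ s, (fun r => H (s, r)) = (Iic s).indicator (fun r => u s * v r) := by
    intro s; funext r
    by_cases h : r ≤ s <;> simp [hH, hW, indicator_apply, h]
  have hKslice : ∀ s, (fun r => K (s, r)) = (Ioi s).indicator (fun r => u s * v r) := by
    intro s; funext r
    by_cases h : s < r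
    · simp [hK, hW, indicator_apply, h]
    · simp [hK, indicator_apply, h]
  have hKslice' : ∀ s, (fun r => K (r, s)) = (Iio s).indicator (fun r => u r * v s) := by
    intro s; funext r
    by_cases h : r < s <;> simp [hK, hW, indicator_apply, h]
  -- integrability of slices
  have hHint : ∀ s : ℝ, Integrable (fun r => H (s, r)) (volume.restrict I) := by
    intro s; rw [hHslice s]
    exact ((hvI.const_mul (u s)).indicator measurableSet_Iic)
  have hKint : ∀ s : ℝ, Integrable (fun r => K (s, r)) (volume.restrict I) := by
    intro s; rw [hKslice s]
    exact ((hvI.const_mul (u s)).indicator measurableSet_Ioi)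
  -- B : first term
  have hB : ∫ s in I, u s * V s = ∫ s in I, ∫ r in I, H (s, r) := by
    refine (setIntegral_congr_fun hmI fun s hs => ?_).symm
    rw [hHslice s, setIntegral_indicator measurableSet_Iic]
    have hseq : I ∩ Iic s = Ioc a s := by
      rw [hI, Ioc_inter_Iic, min_eq_right hs.2]
    rw [hseq, MeasureTheory.integral_const_mul]
  -- C : second term
  have hC : ∫ s in I, U s * v s = ∫ s in I, ∫ r in I, K (r, s) := by
    refine (setIntegral_congr_fun hmI fun s hs => ?_).symm
    rw [hKslice' s, setIntegral_indicator measurableSet_Iio]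
    have hseq : I ∩ Iio s = Ioo a s := by
      rw [hI]; ext y
      simp only [mem_inter_iff, mem_Ioc, mem_Iio, mem_Ioo]
      constructor
      · rintro ⟨⟨h1, _⟩, h3⟩; exact ⟨h1, h3⟩
      · rintro ⟨h1, h2⟩; exact ⟨⟨h1, (h2.trans_le hs.2).le⟩, h2⟩
    rw [hseq, MeasureTheory.integral_mul_const]
    show (∫ r in Ioo a s, u r) * v s = (∫ r in Ioc a s, u r) * v s
    rw [integral_Ioc_eq_integral_Ioo]
  -- D : Fubini swap
  have hD : ∫ s in I, ∫ r in I, K (r, s) = ∫ s in I, ∫ r in I, K (s, r) := by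
    have hint : Integrable (Function.uncurry fun s r => K (r, s))
        ((volume.restrict I).prod (volume.restrict I)) := by
      have heq : (Function.uncurry fun s r => K (r, s))
          = ({q : ℝ × ℝ | q.2 < q.1}).indicator (fun q => u q.2 * v q.1) := by
        funext q
        by_cases h : q.2 < q.1 <;> simp [Function.uncurry, hK, hW, indicator_apply, h]
      rw [heq]
      have hbase : Integrable (fun q : ℝ × ℝ => u q.2 * v q.1)
          ((volume.restrict I).prod (volume.restrict I)) := by
        have := hvI.mul_prod huI
        have heq2 : (fun q : ℝ × ℝ => u q.2 * v q.1) = fun q : ℝ × ℝ => v q.1 * u q.2 := by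
          funext q; ring
        rw [heq2]; exact this
      exact hbase.indicator (measurableSet_lt measurable_snd measurable_fst)
    exact integral_integral_swap hint
  -- E : sum identity
  have hprodW : Integrable W ((volume.restrict I).prod (volume.restrict I)) :=
    huI.mul_prod hvI
  have hprodH : Integrable H ((volume.restrict I).prod (volume.restrict I)) :=
    hprodW.indicator (measurableSet_le measurable_snd measurable_fst)
  have hprodK : Integrable K ((volume.restrict I).prod (volume.restrict I)) :=
    hprodW.indicator (measurableSet_lt measurable_fst measurable_snd)
  have hintH : Integrable (fun s => ∫ r in I, H (s, r)) (volume.restrict I) :=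
    hprodH.integral_prod_left
  have hintK : Integrable (fun s => ∫ r in I, K (s, r)) (volume.restrict I) :=
    hprodK.integral_prod_left
  have hE : U t * V t = (∫ s in I, ∫ r in I, H (s, r)) + ∫ s in I, ∫ r in I, K (s, r) := by
    have h1 : U t * V t = ∫ s in I, ∫ r in I, u s * v r := by
      rw [hU, hV]
      rw [← MeasureTheory.integral_mul_const]
      refine setIntegral_congr_fun hmI fun s _ => ?_
      rw [MeasureTheory.integral_const_mul]
    have hsum : EqOn (fun s => ∫ r in I, u s * v r)
        (fun s => (∫ r in I, H (s, r)) + ∫ r in I, K (s, r)) I := by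
      intro s _
      show (∫ r in I, u s * v r) = (∫ r in I, H (s, r)) + ∫ r in I, K (s, r)
      rw [← MeasureTheory.integral_add (hHint s) (hKint s)]
      refine setIntegral_congr_fun hmI fun r _ => ?_
      by_cases h : r ≤ s
      · have h2 : ¬ s < r := not_lt.2 h
        simp [hH, hK, hW, indicator_apply, h, h2]
      · have h2 : s < r := not_le.1 h
        simp [hH, hK, hW, indicator_apply, h, h2]
    rw [h1, setIntegral_congr_fun hmI hsum]
    exact MeasureTheory.integral_add hintH hintK
  -- assemble
  have hintuV : Integrable (fun s => u s * V s) (volume.restrict I) := by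
    have hVc : ContinuousOn V (Icc a b) := continuousOn_primitive hv
    exact ((hu.mul_continuousOn hVc isCompact_Icc).mono_set hIsub)
  have hintUv : Integrable (fun s => U s * v s) (volume.restrict I) := by
    have hUc : ContinuousOn U (Icc a b) := continuousOn_primitive hu
    have : IntegrableOn (fun s => v s * U s) (Icc a b) volume :=
      hv.mul_continuousOn hUc isCompact_Icc
    have heq : (fun s => U s * v s) = fun s => v s * U s := by funext s; ring
    rw [heq]; exact this.mono_set hIsub
  have hfinal : U t * V t = ∫ s in I, (u s * V s + U s * v s) := by
    rw [integral_add hintuV hintUv, hB, hC, hD, hE]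
  -- back to interval integrals
  rw [intervalIntegral.integral_of_le hat, intervalIntegral.integral_of_le hat,
    intervalIntegral.integral_of_le hat]
  show U t * V t = _
  rw [hfinal]
  refine setIntegral_congr_fun hmI fun s hs => ?_
  rw [intervalIntegral.integral_of_le hs.1.le, intervalIntegral.integral_of_le hs.1.le]


theorem Rep.mul (hab : a ≤ b) {f g u v : ℝ → ℂ} (hu : IntegrableOn u (Icc a b) volume)
    (hv : IntegrableOn v (Icc a b) volume) (hf : Rep a b f u) (hg : Rep a b g v) :
    Rep a b (fun t => f t * g t) (fun t => u t * g t + f t * v t) := by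
  intro t ht
  have hat : a ≤ t := ht.1
  have hIccsub : Icc a t ⊆ Icc a b := Icc_subset_Icc le_rfl ht.2
  have hVc : ContinuousOn (fun s => ∫ r in Ioc a s, v r) (Icc a b) := continuousOn_primitive hv
  have hUc : ContinuousOn (fun s => ∫ r in Ioc a s, u r) (Icc a b) := continuousOn_primitive hu
  have i1 : IntervalIntegrable (fun s => u s * g a) volume a t := (II hu ht).mul_const _
  have i2 : IntervalIntegrable (fun s => f a * v s) volume a t := (II hv ht).const_mul _
  have i3 : IntervalIntegrable (fun s => u s * (∫ r in a..s, v r)) volume a t := by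
    have h3 : IntegrableOn (fun s => u s * ∫ r in Ioc a s, v r) (Icc a b) volume :=
      hu.mul_continuousOn hVc isCompact_Icc
    have h4 : IntegrableOn (fun s => u s * ∫ r in a..s, v r) (Icc a t) volume := by
      refine (h3.mono_set hIccsub).congr_fun (fun s hs => ?_) measurableSet_Icc
      show u s * (∫ r in Ioc a s, v r) = u s * ∫ r in a..s, v r
      rw [intervalIntegral.integral_of_le hs.1]
    exact (intervalIntegrable_iff_integrableOn_Icc_of_le hat).2 h4
  have i4 : IntervalIntegrable (fun s => (∫ r in a..s, u r) * v s) volume a t := by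
    have h3 : IntegrableOn (fun s => v s * ∫ r in Ioc a s, u r) (Icc a b) volume :=
      hv.mul_continuousOn hUc isCompact_Icc
    have h4 : IntegrableOn (fun s => (∫ r in a..s, u r) * v s) (Icc a t) volume := by
      refine (h3.mono_set hIccsub).congr_fun (fun s hs => ?_) measurableSet_Icc
      show v s * (∫ r in Ioc a s, u r) = (∫ r in a..s, u r) * v s
      rw [intervalIntegral.integral_of_le hs.1]
      ring
    exact (intervalIntegrable_iff_integrableOn_Icc_of_le hat).2 h4
  have hTeq : EqOn (fun s => u s * g s + f s * v s)
      (fun s => (u s * g a + f a * v s)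
        + (u s * (∫ r in a..s, v r) + (∫ r in a..s, u r) * v s)) (uIcc a t) := by
    intro s hs
    rw [uIcc_of_le hat] at hs
    have hsI : s ∈ Icc a b := hIccsub hs
    show u s * g s + f s * v s = _
    rw [hf s hsI, hg s hsI]
    ring
  show f t * g t = f a * g a + ∫ s in a..t, (u s * g s + f s * v s)
  rw [intervalIntegral.integral_congr hTeq,
    intervalIntegral.integral_add (i1.add i2) (i3.add i4),
    intervalIntegral.integral_add i1 i2,
    intervalIntegral.integral_mul_const, intervalIntegral.integral_const_mul,
    ← primitive_mul hab hu hv ht]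
  have h5 : ∫ s in a..t, u s = f t - f a := by rw [hf t ht]; ring
  have h6 : ∫ s in a..t, v s = g t - g a := by rw [hg t ht]; ring
  rw [h5, h6]
  ring


theorem first_two_le {n : ℕ} (f : ℝ → ℂ) :
    (eLpNorm f p (volume.restrict (Icc a b))).toReal
      + (eLpNorm (iteratedDerivWithin 1 f (Icc a b)) p (volume.restrict (Icc a b))).toReal
      ≤ WNorm p a b (n + 1) f := by
  unfold WNorm
  have h := Finset.sum_le_sum_of_subset_of_nonneg
    (Finset.range_subset_range.2 (show 2 ≤ n + 1 + 1 by omega))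
    (f := fun k =>
      (eLpNorm (iteratedDerivWithin k f (Icc a b)) p (volume.restrict (Icc a b))).toReal)
    (fun _ _ _ => ENNReal.toReal_nonneg)
  rw [Finset.sum_range_succ, Finset.sum_range_one] at h
  simp only [iteratedDerivWithin_zero] at h
  exact h

theorem sup_wnorm (hab : a < b) (hp : 1 ≤ p) {n : ℕ} {f : ℝ → ℂ}
    (hf : MemW p a b (n + 1) f) : ∀ t ∈ Icc a b,
    ‖f t‖ ≤ ((b - a)⁻¹ + 1) * Jc p a b * WNorm p a b (n + 1) f := by
  obtain ⟨u, hrep, hu⟩ := hf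
  have hulp := memW_memLp hab.le hp hu
  have hui := memLp_integrableOn hp hulp
  have hsup := sup_bound hab hp hui hulp hrep
  intro t ht
  refine (hsup t ht).trans ?_
  have h0 := shift_ae hab hp hrep hu (Nat.zero_le n)
  simp only [zero_add, iteratedDerivWithin_zero] at h0
  have h1 : (eLpNorm u p (volume.restrict (Icc a b))).toReal
      = (eLpNorm (iteratedDerivWithin 1 f (Icc a b)) p (volume.restrict (Icc a b))).toReal :=
    congrArg ENNReal.toReal (eLpNorm_congr_ae h0).symm
  have hK : 0 ≤ ((b - a)⁻¹ + 1) * Jc p a b := by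
    have hba : (0:ℝ) < b - a := by linarith
    have h2 : (0:ℝ) ≤ (b - a)⁻¹ + 1 := by positivity
    exact mul_nonneg h2 Jc_nonneg
  refine mul_le_mul_of_nonneg_left ?_ hK
  rw [h1]
  exact first_two_le f

theorem memLp_mul_of_bound_right {φ ψ : ℝ → ℂ}
    (hφm : AEStronglyMeasurable φ (volume.restrict (Icc a b)))
    (hψ : MemLp ψ p (volume.restrict (Icc a b))) {M : ℝ} (hM0 : 0 ≤ M)
    (hM : ∀ t ∈ Icc a b, ‖φ t‖ ≤ M) :
    MemLp (fun t => ψ t * φ t) p (volume.restrict (Icc a b)) ∧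
    (eLpNorm (fun t => ψ t * φ t) p (volume.restrict (Icc a b))).toReal
      ≤ M * (eLpNorm ψ p (volume.restrict (Icc a b))).toReal := by
  have h := memLp_mul_of_bound hφm hψ hM0 hM
  have heq : (fun t => ψ t * φ t) = fun t => φ t * ψ t := by funext t; ring
  rw [heq]
  exact h


theorem memW_zero {f : ℝ → ℂ} : MemW p a b 0 f ↔ MemLp f p (volume.restrict (Icc a b)) :=
  Iff.rfl

set_option maxHeartbeats 1000000 in
theorem main (hab : a < b) (hp : 1 ≤ p) : ∀ n : ℕ, 1 ≤ n →
    (∀ f g : ℝ → ℂ, MemW p a b n f → MemW p a b n g →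
      MemW p a b n (fun t => f t * g t)) ∧
    ∃ C : ℝ, 0 < C ∧ ∀ f g : ℝ → ℂ, MemW p a b n f → MemW p a b n g →
      WNorm p a b n (fun t => f t * g t) ≤ C * WNorm p a b n f * WNorm p a b n g := by
  have hba : (0:ℝ) < b - a := by linarith
  have hKc0 : 0 ≤ ((b - a)⁻¹ + 1) * Jc p a b := by
    have h2 : (0:ℝ) ≤ (b - a)⁻¹ + 1 := by positivity
    exact mul_nonneg h2 Jc_nonneg
  set Kc : ℝ := ((b - a)⁻¹ + 1) * Jc p a b with hKcdef
  intro n hn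
  induction n, hn using Nat.le_induction with
  | base =>
    have hcomb : ∀ f g : ℝ → ℂ, MemW p a b 1 f → MemW p a b 1 g →
        MemW p a b 1 (fun t => f t * g t) ∧
        WNorm p a b 1 (fun t => f t * g t)
          ≤ 3 * Kc * WNorm p a b 1 f * WNorm p a b 1 g := by
      intro f g hf hg
      have hf' := hf
      have hg' := hg
      obtain ⟨u, hurep, hu⟩ := hf
      obtain ⟨v, hvrep, hv⟩ := hg
      have hulp : MemLp u p (volume.restrict (Icc a b)) := hu
      have hvlp : MemLp v p (volume.restrict (Icc a b)) := hv
      have hui := memLp_integrableOn hp hulp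
      have hvi := memLp_integrableOn hp hvlp
      have hfc := Rep.continuousOn hab.le hui hurep
      have hgc := Rep.continuousOn hab.le hvi hvrep
      set Wf := WNorm p a b 1 f with hWfd
      set Wg := WNorm p a b 1 g with hWgd
      have hWf0 : 0 ≤ Wf := wnorm_nonneg _ _
      have hWg0 : 0 ≤ Wg := wnorm_nonneg _ _
      have hMf : ∀ t ∈ Icc a b, ‖f t‖ ≤ Kc * Wf := sup_wnorm hab hp hf'
      have hMg : ∀ t ∈ Icc a b, ‖g t‖ ≤ Kc * Wg := sup_wnorm hab hp hg'
      have hMf0 : 0 ≤ Kc * Wf := mul_nonneg hKc0 hWf0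
      have hMg0 : 0 ≤ Kc * Wg := mul_nonneg hKc0 hWg0
      have hug := memLp_mul_of_bound_right
        (hgc.aestronglyMeasurable measurableSet_Icc) hulp hMg0 hMg
      have hfv := memLp_mul_of_bound
        (hfc.aestronglyMeasurable measurableSet_Icc) hvlp hMf0 hMf
      have hrepm := Rep.mul hab.le hui hvi hurep hvrep
      have hwlp : MemLp (fun t => u t * g t + f t * v t) p (volume.restrict (Icc a b)) :=
        hug.1.add hfv.1
      have hmem : MemW p a b 1 (fun t => f t * g t) := ⟨_, hrepm, hwlp⟩
      refine ⟨hmem, ?_⟩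
      have hglp := contOn_memLp (p := p) hgc
      have hfg0 := memLp_mul_of_bound
        (hfc.aestronglyMeasurable measurableSet_Icc) hglp hMf0 hMf
      have hEq := normEq (n := 0) hab hp hrepm hwlp
      rw [wnorm_zero_eq] at hEq
      have h2 := normEq hab hp hurep hu
      rw [wnorm_zero_eq] at h2
      have h3 := normEq hab hp hvrep hv
      rw [wnorm_zero_eq] at h3
      have hu_le : (eLpNorm u p (volume.restrict (Icc a b))).toReal ≤ Wf := by
        rw [hWfd, h2]
        have := ENNReal.toReal_nonneg
          (a := eLpNorm f p (volume.restrict (Icc a b)))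
        linarith
      have hv_le : (eLpNorm v p (volume.restrict (Icc a b))).toReal ≤ Wg := by
        rw [hWgd, h3]
        have := ENNReal.toReal_nonneg
          (a := eLpNorm g p (volume.restrict (Icc a b)))
        linarith
      have hS0g : (eLpNorm g p (volume.restrict (Icc a b))).toReal ≤ Wg := elp_le_wnorm g
      have t1 : (eLpNorm (fun t => f t * g t) p (volume.restrict (Icc a b))).toReal
          ≤ Kc * Wf * Wg := by
        refine hfg0.2.trans ?_
        exact mul_le_mul_of_nonneg_left hS0g hMf0
      have t2 : (eLpNorm (fun t => u t * g t) p (volume.restrict (Icc a b))).toReal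
          ≤ Kc * Wf * Wg := by
        refine hug.2.trans ?_
        have h5 := mul_le_mul_of_nonneg_left hu_le hMg0
        have h6 : Kc * Wg * Wf = Kc * Wf * Wg := by ring
        linarith
      have t3 : (eLpNorm (fun t => f t * v t) p (volume.restrict (Icc a b))).toReal
          ≤ Kc * Wf * Wg := by
        refine hfv.2.trans ?_
        exact mul_le_mul_of_nonneg_left hv_le hMf0
      have t4 := elp_add_le hp hug.1 hfv.1
      rw [hEq]
      have hexp : 3 * Kc * Wf * Wg = Kc * Wf * Wg + Kc * Wf * Wg + Kc * Wf * Wg := by ring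
      linarith
    refine ⟨fun f g hf hg => (hcomb f g hf hg).1, 3 * Kc + 1, by linarith, ?_⟩
    intro f g hf hg
    refine (hcomb f g hf hg).2.trans ?_
    have h1 : 0 ≤ WNorm p a b 1 f * WNorm p a b 1 g :=
      mul_nonneg (wnorm_nonneg _ _) (wnorm_nonneg _ _)
    have hexp : (3 * Kc + 1) * WNorm p a b 1 f * WNorm p a b 1 g
        = 3 * Kc * WNorm p a b 1 f * WNorm p a b 1 g
          + WNorm p a b 1 f * WNorm p a b 1 g := by ring
    linarith
  | succ n hn ih =>
    obtain ⟨ihmem, C, hC0, ihC⟩ := ih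
    have hcomb : ∀ f g : ℝ → ℂ, MemW p a b (n + 1) f → MemW p a b (n + 1) g →
        MemW p a b (n + 1) (fun t => f t * g t) ∧
        WNorm p a b (n + 1) (fun t => f t * g t)
          ≤ (Kc + 2 * C) * WNorm p a b (n + 1) f * WNorm p a b (n + 1) g := by
      intro f g hf hg
      have hf' := hf
      have hg' := hg
      obtain ⟨u, hurep, hu⟩ := hf
      obtain ⟨v, hvrep, hv⟩ := hg
      have hui := memLp_integrableOn hp (memW_memLp hab.le hp hu)
      have hvi := memLp_integrableOn hp (memW_memLp hab.le hp hv)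
      have hfc := Rep.continuousOn hab.le hui hurep
      have hgc := Rep.continuousOn hab.le hvi hvrep
      have hfn : MemW p a b n f := memW_mono hab.le hp hf'
      have hgn : MemW p a b n g := memW_mono hab.le hp hg'
      have hug : MemW p a b n (fun t => u t * g t) := ihmem u g hu hgn
      have hfv : MemW p a b n (fun t => f t * v t) := ihmem f v hfn hv
      have hsum : MemW p a b n (fun t => u t * g t + f t * v t) :=
        memW_add hab.le hp hug hfv
      have hrepm := Rep.mul hab.le hui hvi hurep hvrep
      have hmem : MemW p a b (n + 1) (fun t => f t * g t) := ⟨_, hrepm, hsum⟩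
      refine ⟨hmem, ?_⟩
      set Wf := WNorm p a b (n + 1) f with hWfd
      set Wg := WNorm p a b (n + 1) g with hWgd
      have hWf0 : 0 ≤ Wf := wnorm_nonneg _ _
      have hWg0 : 0 ≤ Wg := wnorm_nonneg _ _
      have hMf : ∀ t ∈ Icc a b, ‖f t‖ ≤ Kc * Wf := sup_wnorm hab hp hf'
      have hMf0 : 0 ≤ Kc * Wf := mul_nonneg hKc0 hWf0
      have hglp := memW_memLp hab.le hp hg'
      have hfg0 := memLp_mul_of_bound
        (hfc.aestronglyMeasurable measurableSet_Icc) hglp hMf0 hMf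
      have hEq := normEq hab hp hrepm hsum
      have htri := wnorm_add_le hab hp hug hfv
      have hugB := ihC u g hu hgn
      have hfvB := ihC f v hfn hv
      have hWnu : WNorm p a b n u ≤ Wf := by
        have h2 := normEq hab hp hurep hu
        rw [hWfd, h2]
        have := ENNReal.toReal_nonneg
          (a := eLpNorm f p (volume.restrict (Icc a b)))
        linarith
      have hWnv : WNorm p a b n v ≤ Wg := by
        have h3 := normEq hab hp hvrep hv
        rw [hWgd, h3]
        have := ENNReal.toReal_nonneg
          (a := eLpNorm g p (volume.restrict (Icc a b)))
        linarith
      have hWnf : WNorm p a b n f ≤ Wf := wnorm_mono (by omega) f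
      have hWng : WNorm p a b n g ≤ Wg := wnorm_mono (by omega) g
      have hS0g : (eLpNorm g p (volume.restrict (Icc a b))).toReal ≤ Wg := elp_le_wnorm g
      have hn0 : 0 ≤ WNorm p a b n u := wnorm_nonneg _ _
      have hn1 : 0 ≤ WNorm p a b n g := wnorm_nonneg _ _
      have hn2 : 0 ≤ WNorm p a b n f := wnorm_nonneg _ _
      have hn3 : 0 ≤ WNorm p a b n v := wnorm_nonneg _ _
      have t1 : (eLpNorm (fun t => f t * g t) p (volume.restrict (Icc a b))).toReal
          ≤ Kc * Wf * Wg := by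
        refine hfg0.2.trans ?_
        exact mul_le_mul_of_nonneg_left hS0g hMf0
      have t2 : WNorm p a b n (fun t => u t * g t) ≤ C * (Wf * Wg) := by
        refine hugB.trans ?_
        have h4 : WNorm p a b n u * WNorm p a b n g ≤ Wf * Wg :=
          mul_le_mul hWnu hWng hn1 hWf0
        have h5 := mul_le_mul_of_nonneg_left h4 hC0.le
        have h6 : C * WNorm p a b n u * WNorm p a b n g
            = C * (WNorm p a b n u * WNorm p a b n g) := by ring
        linarith
      have t3 : WNorm p a b n (fun t => f t * v t) ≤ C * (Wf * Wg) := by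
        refine hfvB.trans ?_
        have h4 : WNorm p a b n f * WNorm p a b n v ≤ Wf * Wg :=
          mul_le_mul hWnf hWnv hn3 hWf0
        have h5 := mul_le_mul_of_nonneg_left h4 hC0.le
        have h6 : C * WNorm p a b n f * WNorm p a b n v
            = C * (WNorm p a b n f * WNorm p a b n v) := by ring
        linarith
      rw [hEq]
      have hexp : (Kc + 2 * C) * Wf * Wg
          = Kc * Wf * Wg + C * (Wf * Wg) + C * (Wf * Wg) := by ring
      linarith
    refine ⟨fun f g hf hg => (hcomb f g hf hg).1, Kc + 2 * C + 1, by linarith, ?_⟩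
    intro f g hf hg
    refine (hcomb f g hf hg).2.trans ?_
    have h1 : 0 ≤ WNorm p a b (n + 1) f * WNorm p a b (n + 1) g :=
      mul_nonneg (wnorm_nonneg _ _) (wnorm_nonneg _ _)
    have hexp : (Kc + 2 * C + 1) * WNorm p a b (n + 1) f * WNorm p a b (n + 1) g
        = (Kc + 2 * C) * WNorm p a b (n + 1) f * WNorm p a b (n + 1) g
          + WNorm p a b (n + 1) f * WNorm p a b (n + 1) g := by ring
    linarith

end SobAux

theorem stmt2 (p : ℝ≥0∞) (a b : ℝ) (hab : a < b) (hp : 1 ≤ p) (n : ℕ) (hn : 1 ≤ n) :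
    (∀ f g : ℝ → ℂ, MemW p a b n f → MemW p a b n g →
      MemW p a b n (fun t => f t * g t)) ∧
    ∃ C : ℝ, 0 < C ∧ ∀ f g : ℝ → ℂ, MemW p a b n f → MemW p a b n g →
      WNorm p a b n (fun t => f t * g t) ≤ C * WNorm p a b n f * WNorm p a b n g :=
  SobAux.main hab hp n hn
end
end

section
/- Let Y ∈ W^n_p([a,b];ℂ^{m×m}) with n ≥ 1 be such that Y(a) = I_m and det Y(t) ≠ 0 for all t ∈ [a,b]. Then A(t) := −Y'(t)Y(t)⁻¹ defines a matrix function with entries in W^{n-1}_p([a,b];ℂ), and Y is the unique solution of the Cauchy problem Y' + AY = 0, Y(a) = I_m. -/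
open MeasureTheory Set Filter Topology Matrix
open scoped ENNReal NNReal

noncomputable section

/-- `Y` is the matricant of the system `Y' + A Y = 0`, `Y(a) = I`: it is continuous on
`[a,b]` and satisfies the equivalent integral equation entrywise. -/
def IsMatricant {m : ℕ} (a b : ℝ) (A Y : ℝ → Matrix (Fin m) (Fin m) ℂ) : Prop :=
  (∀ i j, ContinuousOn (fun t => Y t i j) (Icc a b)) ∧ Y a = 1 ∧
    ∀ i j, ∀ t ∈ Icc a b,
      Y t i j = (1 : Matrix (Fin m) (Fin m) ℂ) i j - ∫ s in a..t, (A s * Y s) i j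

/-- Entrywise derivative of a matrix-valued function on `[a,b]`. -/
def matDeriv {m : ℕ} (a b : ℝ) (Y : ℝ → Matrix (Fin m) (Fin m) ℂ) (t : ℝ) :
    Matrix (Fin m) (Fin m) ℂ :=
  Matrix.of fun i j => derivWithin (fun s => Y s i j) (Icc a b) t

/-- The differential expression `L y = y' + A y` (derivative taken within `[a,b]`). -/
def Lop {m : ℕ} (a b : ℝ) (A : ℝ → Matrix (Fin m) (Fin m) ℂ) (y : ℝ → Fin m → ℂ)
    (t : ℝ) : Fin m → ℂ :=
  (fun i => derivWithin (fun s => y s i) (Icc a b) t) + A t *ᵥ y t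

/-- A vector-valued function belongs to `W^n_p([a,b]; ℂ^m)` iff each component does. -/
def InW {m : ℕ} (p : ℝ≥0∞) (a b : ℝ) (n : ℕ) (y : ℝ → Fin m → ℂ) : Prop :=
  ∀ i, MemW p a b n (fun t => y t i)

section Helpers

variable {p : ℝ≥0∞} {a b : ℝ}


variable {p : ℝ≥0∞} {a b : ℝ}

theorem memW_zero {f : ℝ → ℂ} : MemW p a b 0 f ↔ MemLp f p (volume.restrict (Icc a b)) := by
  simp only [MemW]

theorem memW_succ {n : ℕ} {f : ℝ → ℂ} : MemW p a b (n + 1) f ↔ ∃ g : ℝ → ℂ,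
    (∀ t ∈ Icc a b, f t = f a + ∫ s in a..t, g s) ∧ MemW p a b n g := by
  simp only [MemW]

theorem finMeasIcc : IsFiniteMeasure (volume.restrict (Icc a b)) :=
  ⟨by rw [Measure.restrict_apply_univ]; exact isCompact_Icc.measure_lt_top⟩

theorem memW_zero_of_continuousOn {f : ℝ → ℂ} (hf : ContinuousOn f (Icc a b)) :
    MemW p a b 0 f := by
  rw [memW_zero]
  haveI := finMeasIcc (a := a) (b := b)
  obtain ⟨C, hC⟩ := isCompact_Icc.exists_bound_of_continuousOn hf
  exact MemLp.of_bound (hf.aestronglyMeasurable measurableSet_Icc) C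
    ((ae_restrict_iff' measurableSet_Icc).2 (Eventually.of_forall hC))

theorem memW_integrableOn (hp : 1 ≤ p) {f : ℝ → ℂ} (hf : MemW p a b 0 f) :
    IntegrableOn f (Icc a b) := by
  haveI := finMeasIcc (a := a) (b := b)
  exact memLp_one_iff_integrable.1 ((memW_zero.1 hf).mono_exponent hp)

theorem integrableOn_intervalIntegrable {E : Type*} [NormedAddCommGroup E]
    {f : ℝ → E} (hf : IntegrableOn f (Icc a b)) {c d : ℝ}
    (hc : c ∈ Icc a b) (hd : d ∈ Icc a b) : IntervalIntegrable f volume c d := by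
  rw [intervalIntegrable_iff]
  exact hf.mono_set (Set.uIoc_subset_uIcc.trans (uIcc_subset_Icc hc hd))

theorem memW_intervalIntegrable (hp : 1 ≤ p) {f : ℝ → ℂ} (hf : MemW p a b 0 f) {c d : ℝ}
    (hc : c ∈ Icc a b) (hd : d ∈ Icc a b) : IntervalIntegrable f volume c d :=
  integrableOn_intervalIntegrable (memW_integrableOn hp hf) hc hd

theorem memW_of_succ (hab : a ≤ b) (hp : 1 ≤ p) :
    ∀ (n : ℕ) {f : ℝ → ℂ}, MemW p a b (n + 1) f → MemW p a b n f
  | 0, f, hf => by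
    obtain ⟨g, hfg, hg⟩ := memW_succ.1 hf
    apply memW_zero_of_continuousOn
    have h1 : ContinuousOn (fun t => f a + ∫ s in a..t, g s) (Icc a b) := by
      apply continuousOn_const.add
      have h2 := intervalIntegral.continuousOn_primitive_interval (a := a) (b := b)
        (μ := volume) (f := g) (by rw [uIcc_of_le hab]; exact memW_integrableOn hp hg)
      rwa [uIcc_of_le hab] at h2
    exact h1.congr hfg
  | n + 1, f, hf => by
    obtain ⟨g, hfg, hg⟩ := memW_succ.1 hf
    exact memW_succ.2 ⟨g, hfg, memW_of_succ hab hp n hg⟩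

theorem memW_mono (hab : a ≤ b) (hp : 1 ≤ p) {k n : ℕ} (hkn : k ≤ n) {f : ℝ → ℂ}
    (hf : MemW p a b n f) : MemW p a b k f := by
  induction n with
  | zero => rwa [Nat.le_zero.1 hkn]
  | succ n ih =>
    by_cases hk : k = n + 1
    · rwa [hk]
    · exact ih (Nat.lt_succ_iff.1 (lt_of_le_of_ne hkn hk)) (memW_of_succ hab hp n hf)

theorem memW_continuousOn (hab : a ≤ b) (hp : 1 ≤ p) {n : ℕ} {f : ℝ → ℂ}
    (hf : MemW p a b (n + 1) f) : ContinuousOn f (Icc a b) := by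
  obtain ⟨g, hfg, hg⟩ := memW_succ.1 hf
  have hg0 : MemW p a b 0 g := memW_mono hab hp (Nat.zero_le n) hg
  have h1 : ContinuousOn (fun t => f a + ∫ s in a..t, g s) (Icc a b) := by
    apply continuousOn_const.add
    have h2 := intervalIntegral.continuousOn_primitive_interval (a := a) (b := b)
      (μ := volume) (f := g) (by rw [uIcc_of_le hab]; exact memW_integrableOn hp hg0)
    rwa [uIcc_of_le hab] at h2
  exact h1.congr hfg

theorem memW_congr (hab : a ≤ b) {n : ℕ} {f h : ℝ → ℂ} (he : ∀ t ∈ Icc a b, f t = h t)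
    (hh : MemW p a b n h) : MemW p a b n f := by
  cases n with
  | zero =>
    rw [memW_zero] at hh ⊢
    exact (memLp_congr_ae ((ae_restrict_mem measurableSet_Icc).mono fun x hx => he x hx)).2 hh
  | succ n =>
    obtain ⟨g, hg1, hg2⟩ := memW_succ.1 hh
    exact memW_succ.2 ⟨g, fun t ht => by
      rw [he t ht, he a ⟨le_refl a, hab⟩, hg1 t ht], hg2⟩

theorem memW_const (c : ℂ) : ∀ n : ℕ, MemW p a b n (fun _ => c)
  | 0 => memW_zero_of_continuousOn continuousOn_const
  | n + 1 => memW_succ.2 ⟨fun _ => 0, by simp, memW_const 0 n⟩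

theorem memW_add (hab : a ≤ b) (hp : 1 ≤ p) :
    ∀ (n : ℕ) {f g : ℝ → ℂ}, MemW p a b n f → MemW p a b n g →
      MemW p a b n (fun t => f t + g t)
  | 0, f, g, hf, hg => memW_zero.2 ((memW_zero.1 hf).add (memW_zero.1 hg))
  | n + 1, f, g, hf, hg => by
    obtain ⟨u, hfu, hu⟩ := memW_succ.1 hf
    obtain ⟨v, hgv, hv⟩ := memW_succ.1 hg
    refine memW_succ.2 ⟨fun s => u s + v s, fun t ht => ?_, memW_add hab hp n hu hv⟩
    rw [intervalIntegral.integral_add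
      (memW_intervalIntegrable hp (memW_mono hab hp (Nat.zero_le n) hu) ⟨le_refl a, hab⟩ ht)
      (memW_intervalIntegrable hp (memW_mono hab hp (Nat.zero_le n) hv) ⟨le_refl a, hab⟩ ht),
      hfu t ht, hgv t ht]
    ring

theorem memW_neg : ∀ (n : ℕ) {f : ℝ → ℂ}, MemW p a b n f → MemW p a b n (fun t => -f t)
  | 0, f, hf => memW_zero.2 (memW_zero.1 hf).neg
  | n + 1, f, hf => by
    obtain ⟨u, hfu, hu⟩ := memW_succ.1 hf
    refine memW_succ.2 ⟨fun s => -u s, fun t ht => ?_, memW_neg n hu⟩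
    rw [intervalIntegral.integral_neg, hfu t ht]
    ring

theorem memW_const_mul (c : ℂ) : ∀ (n : ℕ) {f : ℝ → ℂ}, MemW p a b n f →
    MemW p a b n (fun t => c * f t)
  | 0, f, hf => memW_zero.2 ((memW_zero.1 hf).const_mul c)
  | n + 1, f, hf => by
    obtain ⟨u, hfu, hu⟩ := memW_succ.1 hf
    refine memW_succ.2 ⟨fun s => c * u s, fun t ht => ?_, memW_const_mul c n hu⟩
    rw [intervalIntegral.integral_const_mul, hfu t ht]
    ring

theorem memW_sum {ι : Type*} (hab : a ≤ b) (hp : 1 ≤ p) {n : ℕ} (s : Finset ι) (f : ι → ℝ → ℂ)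
    (h : ∀ i ∈ s, MemW p a b n (f i)) : MemW p a b n (fun t => ∑ i ∈ s, f i t) := by
  classical
  induction s using Finset.induction with
  | empty => simpa using memW_const 0 n
  | @insert i s his ih =>
    have h1 : MemW p a b n fun t => f i t + ∑ j ∈ s, f j t :=
      memW_add hab hp n (h i (Finset.mem_insert_self i s))
        (ih fun j hj => h j (Finset.mem_insert_of_mem hj))
    exact memW_congr hab (fun t _ => by rw [Finset.sum_insert his]) h1


section Fubini
variable {K : Type*} [RCLike K]

theorem primitive_fubini {t : ℝ} (hat : a ≤ t) {u v : ℝ → K}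
    (hu : IntegrableOn u (Ioc a t)) (hv : IntegrableOn v (Ioc a t)) :
    (∫ s in Ioc a t, u s) * (∫ s in Ioc a t, v s)
      = (∫ s in Ioc a t, u s * ∫ r in Ioc a s, v r)
        + ∫ s in Ioc a t, (∫ r in Ioc a s, u r) * v s := by
  set μ := volume.restrict (Ioc a t) with hμ
  have hprod : Integrable (fun z : ℝ × ℝ => u z.1 * v z.2) (μ.prod μ) := hu.mul_prod hv
  have hS : MeasurableSet {z : ℝ × ℝ | z.2 ≤ z.1} :=
    measurableSet_le measurable_snd measurable_fst
  have htot : ∫ z : ℝ × ℝ, u z.1 * v z.2 ∂(μ.prod μ)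
      = (∫ s in Ioc a t, u s) * ∫ s in Ioc a t, v s := integral_prod_mul u v
  have h1 : ∫ z in {z : ℝ × ℝ | z.2 ≤ z.1}, u z.1 * v z.2 ∂(μ.prod μ)
      = ∫ s in Ioc a t, u s * ∫ r in Ioc a s, v r := by
    rw [← integral_indicator hS, MeasureTheory.integral_prod _ (hprod.indicator hS)]
    apply integral_congr_ae
    filter_upwards [ae_restrict_mem measurableSet_Ioc] with s hs
    have hind : (fun r => ({z : ℝ × ℝ | z.2 ≤ z.1}).indicator
        (fun z : ℝ × ℝ => u z.1 * v z.2) (s, r)) = (Iic s).indicator (fun r => u s * v r) := by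
      funext r
      by_cases h : r ≤ s <;> simp [Set.indicator_apply, h]
    rw [hind, integral_indicator measurableSet_Iic, hμ,
      Measure.restrict_restrict measurableSet_Iic]
    have hset : Iic s ∩ Ioc a t = Ioc a s := by
      ext r
      simp only [mem_inter_iff, mem_Iic, mem_Ioc]
      exact ⟨fun ⟨h1, h2, _⟩ => ⟨h2, h1⟩, fun ⟨h1, h2⟩ => ⟨h2, h1, h2.trans hs.2⟩⟩
    rw [hset, integral_const_mul]
  have h2 : ∫ z in {z : ℝ × ℝ | z.2 ≤ z.1}ᶜ, u z.1 * v z.2 ∂(μ.prod μ)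
      = ∫ s in Ioc a t, (∫ r in Ioc a s, u r) * v s := by
    rw [← integral_indicator hS.compl, MeasureTheory.integral_prod_symm _ (hprod.indicator hS.compl)]
    apply integral_congr_ae
    filter_upwards [ae_restrict_mem measurableSet_Ioc] with r hr
    have hind : (fun s => ({z : ℝ × ℝ | z.2 ≤ z.1}ᶜ).indicator
        (fun z : ℝ × ℝ => u z.1 * v z.2) (s, r)) = (Iio r).indicator (fun s => u s * v r) := by
      funext s
      by_cases h : s < r
      · simp [Set.indicator_apply, h, not_le.2 h]
      · simp [Set.indicator_apply, h, not_lt.1 h]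
    rw [hind, integral_indicator measurableSet_Iio, hμ,
      Measure.restrict_restrict measurableSet_Iio]
    have hset : Iio r ∩ Ioc a t = Ioo a r := by
      ext s
      simp only [mem_inter_iff, mem_Iio, mem_Ioc, mem_Ioo]
      exact ⟨fun ⟨h1, h2, _⟩ => ⟨h2, h1⟩, fun ⟨h1, h2⟩ => ⟨h2, h1, (h2.le.trans hr.2)⟩⟩
    rw [hset, ← integral_Ioc_eq_integral_Ioo, integral_mul_const]
  rw [← htot, ← integral_add_compl hS hprod, h1, h2]

theorem AC_mul (hab : a ≤ b) {f g u v : ℝ → K}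
    (hu : IntegrableOn u (Icc a b)) (hv : IntegrableOn v (Icc a b))
    (hf : ∀ t ∈ Icc a b, f t = f a + ∫ s in a..t, u s)
    (hg : ∀ t ∈ Icc a b, g t = g a + ∫ s in a..t, v s)
    {t : ℝ} (ht : t ∈ Icc a b) :
    f t * g t = f a * g a + ∫ s in a..t, (u s * g s + f s * v s) := by
  have hat : t ∈ Set.Icc a b := ht
  have hat' : a ≤ t := ht.1
  have haIcc : a ∈ Icc a b := ⟨le_refl a, hab⟩
  have hsub : Icc a t ⊆ Icc a b := Icc_subset_Icc_right ht.2
  set U : ℝ → K := fun x => ∫ s in a..x, u s with hU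
  set V : ℝ → K := fun x => ∫ s in a..x, v s with hV
  have iu : IntervalIntegrable u volume a t := by
    rw [intervalIntegrable_iff]
    exact hu.mono_set (Set.uIoc_subset_uIcc.trans (uIcc_subset_Icc haIcc ht))
  have iv : IntervalIntegrable v volume a t := by
    rw [intervalIntegrable_iff]
    exact hv.mono_set (Set.uIoc_subset_uIcc.trans (uIcc_subset_Icc haIcc ht))
  have Ucont : ContinuousOn U (Icc a b) := by
    have h2 := intervalIntegral.continuousOn_primitive_interval (a := a) (b := b)
      (μ := volume) (f := u) (by rwa [uIcc_of_le hab])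
    rwa [uIcc_of_le hab] at h2
  have Vcont : ContinuousOn V (Icc a b) := by
    have h2 := intervalIntegral.continuousOn_primitive_interval (a := a) (b := b)
      (μ := volume) (f := v) (by rwa [uIcc_of_le hab])
    rwa [uIcc_of_le hab] at h2
  have Ucont' : ContinuousOn U (uIcc a t) := Ucont.mono (by rw [uIcc_of_le hat']; exact hsub)
  have Vcont' : ContinuousOn V (uIcc a t) := Vcont.mono (by rw [uIcc_of_le hat']; exact hsub)
  have i1 : IntervalIntegrable (fun s => u s * g a) volume a t := iu.mul_const _
  have i2 : IntervalIntegrable (fun s => u s * V s) volume a t := iu.mul_continuousOn Vcont'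
  have i3 : IntervalIntegrable (fun s => f a * v s) volume a t := iv.const_mul _
  have i4 : IntervalIntegrable (fun s => U s * v s) volume a t := iv.continuousOn_mul Ucont'
  have hcongr : ∫ s in a..t, (u s * g s + f s * v s)
      = ∫ s in a..t, ((u s * g a + f a * v s) + (u s * V s + U s * v s)) := by
    apply intervalIntegral.integral_congr
    intro s hs
    rw [uIcc_of_le hat'] at hs
    have hs' : s ∈ Icc a b := hsub hs
    simp only [hU, hV]
    rw [hf s hs', hg s hs']
    ring
  have hsplit : ∫ s in a..t, ((u s * g a + f a * v s) + (u s * V s + U s * v s))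
      = (∫ s in a..t, (u s * g a + f a * v s)) + ∫ s in a..t, (u s * V s + U s * v s) :=
    intervalIntegral.integral_add (i1.add i3) (i2.add i4)
  have hpart1 : ∫ s in a..t, (u s * g a + f a * v s) = U t * g a + f a * V t := by
    rw [intervalIntegral.integral_add i1 i3, intervalIntegral.integral_mul_const,
      intervalIntegral.integral_const_mul]
  have hpart2 : ∫ s in a..t, (u s * V s + U s * v s) = U t * V t := by
    rw [intervalIntegral.integral_of_le hat']
    have hu' : IntegrableOn u (Ioc a t) := (intervalIntegrable_iff_integrableOn_Ioc_of_le hat').1 iu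
    have hv' : IntegrableOn v (Ioc a t) := (intervalIntegrable_iff_integrableOn_Ioc_of_le hat').1 iv
    have hA : IntegrableOn (fun s => u s * V s) (Ioc a t) :=
      (intervalIntegrable_iff_integrableOn_Ioc_of_le hat').1 i2
    have hB : IntegrableOn (fun s => U s * v s) (Ioc a t) :=
      (intervalIntegrable_iff_integrableOn_Ioc_of_le hat').1 i4
    have heqA : ∀ᵐ s ∂volume.restrict (Ioc a t), u s * V s = u s * ∫ r in Ioc a s, v r := by
      filter_upwards [ae_restrict_mem measurableSet_Ioc] with s hs
      simp only [hV]
      rw [intervalIntegral.integral_of_le hs.1.le]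
    have heqB : ∀ᵐ s ∂volume.restrict (Ioc a t), U s * v s = (∫ r in Ioc a s, u r) * v s := by
      filter_upwards [ae_restrict_mem measurableSet_Ioc] with s hs
      simp only [hU]
      rw [intervalIntegral.integral_of_le hs.1.le]
    have hstep : ∫ s in Ioc a t, (u s * V s + U s * v s)
        = (∫ s in Ioc a t, u s * ∫ r in Ioc a s, v r)
          + ∫ s in Ioc a t, (∫ r in Ioc a s, u r) * v s := by
      rw [integral_add hA hB, integral_congr_ae heqA, integral_congr_ae heqB]
    rw [hstep, ← primitive_fubini hat' hu' hv',
      show U t = ∫ s in Ioc a t, u s from intervalIntegral.integral_of_le hat',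
      show V t = ∫ s in Ioc a t, v s from intervalIntegral.integral_of_le hat']
  have hft : f t = f a + U t := hf t ht
  have hgt : g t = g a + V t := hg t ht
  rw [hcongr, hsplit, hpart1, hpart2, hft, hgt]
  ring
end Fubini


theorem IntegrableOn.mul_contOn {K : Type*} [RCLike K] {w g : ℝ → K}
    (hw : IntegrableOn w (Icc a b)) (hg : ContinuousOn g (Icc a b)) :
    IntegrableOn (fun s => w s * g s) (Icc a b) := by
  haveI : IsFiniteMeasure (volume.restrict (Icc a b)) := finMeasIcc
  obtain ⟨C, hC⟩ := isCompact_Icc.exists_bound_of_continuousOn hg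
  have hm : AEStronglyMeasurable (fun s => w s * g s) (volume.restrict (Icc a b)) :=
    hw.aestronglyMeasurable.mul (hg.aestronglyMeasurable measurableSet_Icc)
  rw [IntegrableOn, ← memLp_one_iff_integrable] at hw ⊢
  refine hw.of_le_mul (c := C) hm ?_
  refine (ae_restrict_iff' measurableSet_Icc).2 (Eventually.of_forall fun x hx => ?_)
  rw [norm_mul, mul_comm (C : ℝ)]
  exact mul_le_mul_of_nonneg_left (hC x hx) (norm_nonneg _)

theorem contOn_primitive {K : Type*} [RCLike K] (hab : a ≤ b) {w : ℝ → K}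
    (hw : IntegrableOn w (Icc a b)) :
    ContinuousOn (fun x => ∫ s in a..x, w s) (Icc a b) := by
  have h2 := intervalIntegral.continuousOn_primitive_interval (a := a) (b := b)
    (μ := volume) (f := w) (by rwa [uIcc_of_le hab])
  rwa [uIcc_of_le hab] at h2



theorem gronwall (hab : a ≤ b) {ψ w : ℝ → ℝ}
    (hψc : ContinuousOn ψ (Icc a b)) (hψ0 : ∀ t ∈ Icc a b, 0 ≤ ψ t)
    (hw : IntegrableOn w (Icc a b)) (hw0 : ∀ s, 0 ≤ w s)
    (hle : ∀ t ∈ Icc a b, ψ t ≤ ∫ s in a..t, w s * ψ s) :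
    ∀ t ∈ Icc a b, ψ t = 0 := by
  set W : ℝ → ℝ := fun x => ∫ s in a..x, w s with hW
  have Wcont : ContinuousOn W (Icc a b) := contOn_primitive hab hw
  have haIcc : a ∈ Icc a b := ⟨le_refl a, hab⟩
  have hbIcc : b ∈ Icc a b := ⟨hab, le_refl b⟩
  have iw : ∀ t ∈ Icc a b, IntervalIntegrable w volume a t := fun t ht =>
    integrableOn_intervalIntegrable hw haIcc ht
  have hW0 : ∀ t ∈ Icc a b, 0 ≤ W t := fun t ht =>
    intervalIntegral.integral_nonneg ht.1 (fun s _ => hw0 s)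
  have hWb : ∀ t ∈ Icc a b, W t ≤ W b := by
    intro t ht
    have h1 : W b - W t = ∫ s in t..b, w s :=
      intervalIntegral.integral_interval_sub_left (iw b hbIcc) (iw t ht)
    have h2 : 0 ≤ ∫ s in t..b, w s := by
      apply intervalIntegral.integral_nonneg ht.2 (fun s _ => hw0 s)
    linarith
  obtain ⟨C, hC⟩ := isCompact_Icc.exists_bound_of_continuousOn hψc
  have hC' : ∀ t ∈ Icc a b, ψ t ≤ C := fun t ht =>
    (le_abs_self _).trans (by simpa [Real.norm_eq_abs] using hC t ht)
  have hC0 : 0 ≤ C := le_trans (hψ0 a haIcc) (hC' a haIcc)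
  have hmul : ∀ (q : ℝ → ℝ), ContinuousOn q (Icc a b) → ∀ t ∈ Icc a b,
      IntervalIntegrable (fun s => w s * q s) volume a t := fun q hq t ht =>
    integrableOn_intervalIntegrable (IntegrableOn.mul_contOn hw hq) haIcc ht
  have hWa : W a = 0 := intervalIntegral.integral_same
  have hpow : ∀ k : ℕ, ∀ t ∈ Icc a b,
      W t ^ (k + 1) = ∫ s in a..t, (((k : ℝ) + 1) * (w s * W s ^ k)) := by
    intro k
    induction k with
    | zero =>
      intro t ht
      simp [hW]
    | succ k ih =>
      intro t ht
      have hv : IntegrableOn (fun s => ((k : ℝ) + 1) * (w s * W s ^ k)) (Icc a b) :=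
        (IntegrableOn.mul_contOn hw (Wcont.pow k)).const_mul _
      have key : W t * W t ^ (k + 1) = W a * W a ^ (k + 1)
          + ∫ s in a..t, (w s * W s ^ (k + 1) + W s * (((k : ℝ) + 1) * (w s * W s ^ k))) := by
        refine AC_mul (K := ℝ) hab hw hv
          (f := W) (g := fun s => W s ^ (k + 1)) ?_ ?_ ht
        · intro r hr
          show W r = W a + ∫ s in a..r, w s
          rw [hWa, zero_add]
        · intro r hr
          show W r ^ (k + 1) = W a ^ (k + 1) + ∫ s in a..r, ((k : ℝ) + 1) * (w s * W s ^ k)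
          rw [ih r hr, hWa, zero_pow (Nat.succ_ne_zero k), zero_add]
      have hcongr2 : ∀ s : ℝ, w s * W s ^ (k + 1) + W s * (((k : ℝ) + 1) * (w s * W s ^ k))
          = ((k : ℝ) + 1 + 1) * (w s * W s ^ (k + 1)) := by
        intro s; ring
      calc W t ^ (k + 1 + 1) = W t * W t ^ (k + 1) := pow_succ' _ _
        _ = W a * W a ^ (k + 1)
            + ∫ s in a..t, (w s * W s ^ (k + 1) + W s * (((k : ℝ) + 1) * (w s * W s ^ k))) := key
        _ = ∫ s in a..t, (((k : ℝ) + 1 + 1) * (w s * W s ^ (k + 1))) := by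
            rw [hWa, zero_mul, zero_add]
            apply intervalIntegral.integral_congr
            intro s _
            exact hcongr2 s
        _ = ∫ s in a..t, ((((k : ℕ) + 1 : ℕ) : ℝ) + 1) * (w s * W s ^ (k + 1)) := by
            push_cast; rfl
  have hbound : ∀ k : ℕ, ∀ t ∈ Icc a b, ψ t ≤ C * W t ^ k / (k.factorial : ℝ) := by
    intro k
    induction k with
    | zero => intro t ht; simpa using hC' t ht
    | succ k ih =>
      intro t ht
      have hqcont : ContinuousOn (fun s => C * W s ^ k / (k.factorial : ℝ)) (Icc a b) :=
        (continuousOn_const.mul (Wcont.pow k)).div_const _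
      have h2 : ∫ s in a..t, w s * ψ s
          ≤ ∫ s in a..t, w s * (C * W s ^ k / (k.factorial : ℝ)) := by
        apply intervalIntegral.integral_mono_on ht.1 (hmul ψ hψc t ht) (hmul _ hqcont t ht)
        intro s hs
        exact mul_le_mul_of_nonneg_left (ih s ⟨hs.1, hs.2.trans ht.2⟩) (hw0 s)
      have h3 : ∫ s in a..t, w s * (C * W s ^ k / (k.factorial : ℝ))
          = (C / (k.factorial : ℝ)) * ∫ s in a..t, (w s * W s ^ k) := by
        rw [← intervalIntegral.integral_const_mul]
        apply intervalIntegral.integral_congr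
        intro s _
        show w s * (C * W s ^ k / (k.factorial : ℝ)) = C / (k.factorial : ℝ) * (w s * W s ^ k)
        ring
      have hk0 : ((k : ℝ) + 1) ≠ 0 := by positivity
      have h4 : ∫ s in a..t, (w s * W s ^ k) = W t ^ (k + 1) / ((k : ℝ) + 1) := by
        have h5 := hpow k t ht
        rw [intervalIntegral.integral_const_mul] at h5
        rw [eq_div_iff hk0]
        linarith
      have hfac : (((k + 1).factorial : ℝ)) = ((k : ℝ) + 1) * (k.factorial : ℝ) := by
        rw [Nat.factorial_succ]; push_cast; ring
      calc ψ t ≤ ∫ s in a..t, w s * ψ s := hle t ht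
        _ ≤ ∫ s in a..t, w s * (C * W s ^ k / (k.factorial : ℝ)) := h2
        _ = (C / (k.factorial : ℝ)) * (W t ^ (k + 1) / ((k : ℝ) + 1)) := by rw [h3, h4]
        _ = C * W t ^ (k + 1) / (((k + 1).factorial : ℝ)) := by
            rw [hfac, div_mul_div_comm, mul_comm ((k.factorial : ℝ)) _]
  intro t ht
  have hlim : Tendsto (fun k : ℕ => C * W b ^ k / (k.factorial : ℝ)) atTop (𝓝 0) := by
    have h1 := FloorSemiring.tendsto_pow_div_factorial_atTop (K := ℝ) (W b)
    have h2 := h1.const_mul C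
    simpa [mul_div_assoc] using h2
  have hub : ∀ k : ℕ, ψ t ≤ C * W b ^ k / (k.factorial : ℝ) := by
    intro k
    refine (hbound k t ht).trans ?_
    have h0 := hW0 t ht
    gcongr
    exact hWb t ht
  have hfin : ψ t ≤ 0 := ge_of_tendsto' hlim hub
  linarith [hψ0 t ht]


theorem memW_zero_mul_cont {f g : ℝ → ℂ} (hf : MemW p a b 0 f)
    (hg : ContinuousOn g (Icc a b)) : MemW p a b 0 (fun t => f t * g t) := by
  rw [memW_zero] at hf ⊢
  haveI : IsFiniteMeasure (volume.restrict (Icc a b)) := finMeasIcc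
  obtain ⟨C, hC⟩ := isCompact_Icc.exists_bound_of_continuousOn hg
  refine hf.of_le_mul (c := C)
    (hf.aestronglyMeasurable.mul (hg.aestronglyMeasurable measurableSet_Icc)) ?_
  refine (ae_restrict_iff' measurableSet_Icc).2 (Eventually.of_forall fun x hx => ?_)
  rw [norm_mul, mul_comm (C : ℝ)]
  exact mul_le_mul_of_nonneg_left (hC x hx) (norm_nonneg _)

theorem memW_mul (hab : a ≤ b) (hp : 1 ≤ p) :
    ∀ (n : ℕ) {f g : ℝ → ℂ}, MemW p a b (n + 1) f → MemW p a b (n + 1) g →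
      MemW p a b (n + 1) (fun t => f t * g t)
  | n, f, g, hf, hg => by
    obtain ⟨u, hfu, hu⟩ := memW_succ.1 hf
    obtain ⟨v, hgv, hv⟩ := memW_succ.1 hg
    have hu0 : IntegrableOn u (Icc a b) :=
      memW_integrableOn hp (memW_mono hab hp (Nat.zero_le n) hu)
    have hv0 : IntegrableOn v (Icc a b) :=
      memW_integrableOn hp (memW_mono hab hp (Nat.zero_le n) hv)
    have fcont := memW_continuousOn hab hp hf
    have gcont := memW_continuousOn hab hp hg
    refine memW_succ.2 ⟨fun s => u s * g s + f s * v s,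
      fun t ht => AC_mul hab hu0 hv0 hfu hgv ht, ?_⟩
    cases n with
    | zero =>
      refine memW_add hab hp 0 (memW_zero_mul_cont hu gcont) ?_
      refine memW_congr hab (fun t _ => mul_comm (f t) (v t)) ?_
      exact memW_zero_mul_cont hv fcont
    | succ k =>
      exact memW_add hab hp (k + 1)
        (memW_mul hab hp k hu (memW_of_succ hab hp (k + 1) hg))
        (memW_mul hab hp k (memW_of_succ hab hp (k + 1) hf) hv)

theorem memW_prod {ι : Type*} (hab : a ≤ b) (hp : 1 ≤ p) {n : ℕ} (s : Finset ι) (f : ι → ℝ → ℂ)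
    (h : ∀ i ∈ s, MemW p a b (n + 1) (f i)) :
    MemW p a b (n + 1) (fun t => ∏ i ∈ s, f i t) := by
  classical
  induction s using Finset.induction with
  | empty => simpa using memW_const 1 (n + 1)
  | @insert i s his ih =>
    exact memW_congr hab (fun t _ => by rw [Finset.prod_insert his])
      (memW_mul hab hp n (h i (Finset.mem_insert_self i s))
        (ih fun j hj => h j (Finset.mem_insert_of_mem hj)))

theorem memW_inv (hab : a ≤ b) (hp : 1 ≤ p) :
    ∀ (n : ℕ) {d : ℝ → ℂ}, MemW p a b (n + 1) d → (∀ t ∈ Icc a b, d t ≠ 0) →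
      MemW p a b (n + 1) (fun t => (d t)⁻¹)
  | n, d, hd, hne => by
    obtain ⟨u, hdu, hu⟩ := memW_succ.1 hd
    have hu0 : IntegrableOn u (Icc a b) :=
      memW_integrableOn hp (memW_mono hab hp (Nat.zero_le n) hu)
    have dcont : ContinuousOn d (Icc a b) := memW_continuousOn hab hp hd
    have dinvcont : ContinuousOn (fun t => (d t)⁻¹) (Icc a b) := dcont.inv₀ hne
    have haIcc : a ∈ Icc a b := ⟨le_refl a, hab⟩
    set h' : ℝ → ℂ := fun s => -(u s * ((d s)⁻¹ * (d s)⁻¹)) with hh'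
    have h'int : IntegrableOn h' (Icc a b) :=
      (IntegrableOn.mul_contOn hu0 (dinvcont.mul dinvcont)).neg
    set h : ℝ → ℂ := fun t => (d a)⁻¹ + ∫ s in a..t, h' s with hh
    have hrep : ∀ t ∈ Icc a b, h t = h a + ∫ s in a..t, h' s := by
      intro t ht
      simp only [hh]
      rw [intervalIntegral.integral_same]
      ring
    have hcont : ContinuousOn h (Icc a b) :=
      continuousOn_const.add (contOn_primitive hab h'int)
    have ha1 : h a * d a = 1 := by
      simp only [hh]
      rw [intervalIntegral.integral_same, add_zero]
      exact inv_mul_cancel₀ (hne a haIcc)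
    have hφint : ∀ t ∈ Icc a b,
        h t * d t - 1 = ∫ s in a..t, (u s * (d s)⁻¹) * (h s * d s - 1) := by
      intro t ht
      have key : h t * d t = h a * d a + ∫ s in a..t, (h' s * d s + h s * u s) :=
        AC_mul hab h'int hu0 hrep hdu ht
      have hcongr : ∫ s in a..t, (h' s * d s + h s * u s)
          = ∫ s in a..t, ((u s * (d s)⁻¹) * (h s * d s - 1)) := by
        apply intervalIntegral.integral_congr
        intro s hs
        rw [uIcc_of_le ht.1] at hs
        have hs' : s ∈ Icc a b := Icc_subset_Icc_right ht.2 hs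
        have hd0 : d s ≠ 0 := hne s hs'
        show h' s * d s + h s * u s = (u s * (d s)⁻¹) * (h s * d s - 1)
        simp only [hh']
        field_simp
        ring
      rw [key, ha1, hcongr]
      ring
    have hφ0 : ∀ t ∈ Icc a b, ‖h t * d t - 1‖ = 0 := by
      refine gronwall hab ?_ (fun t _ => norm_nonneg _)
        (IntegrableOn.mul_contOn hu0 dinvcont).norm (fun s => norm_nonneg _) ?_
      · exact ((hcont.mul dcont).sub continuousOn_const).norm
      · intro t ht
        calc ‖h t * d t - 1‖
            = ‖∫ s in a..t, (u s * (d s)⁻¹) * (h s * d s - 1)‖ := by rw [hφint t ht]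
          _ ≤ ∫ s in a..t, ‖(u s * (d s)⁻¹) * (h s * d s - 1)‖ :=
              intervalIntegral.norm_integral_le_integral_norm ht.1
          _ = ∫ s in a..t, ‖u s * (d s)⁻¹‖ * ‖h s * d s - 1‖ := by
              apply intervalIntegral.integral_congr
              intro s _
              exact norm_mul _ _
    have hEq : ∀ t ∈ Icc a b, (d t)⁻¹ = h t := by
      intro t ht
      have h1 : h t * d t = 1 := sub_eq_zero.1 (norm_eq_zero.1 (hφ0 t ht))
      exact (eq_inv_of_mul_eq_one_left h1).symm ▸ rfl
    refine memW_congr hab hEq (memW_succ.2 ⟨h', hrep, ?_⟩)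
    cases n with
    | zero => exact memW_neg 0 (memW_zero_mul_cont hu (dinvcont.mul dinvcont))
    | succ k =>
      have hdinv : MemW p a b (k + 1) (fun t => (d t)⁻¹) :=
        memW_inv hab hp k (memW_of_succ hab hp (k + 1) hd) hne
      exact memW_neg (k + 1) (memW_mul hab hp k hu (memW_mul hab hp k hdinv hdinv))

open IsUnifLocDoublingMeasure in
theorem ae_hasDerivAt_primitive {g : ℝ → ℂ} (hg : Integrable g volume) (a : ℝ) :
    ∀ᵐ x, HasDerivAt (fun u => ∫ s in a..u, g s) (g x) x := by
  set F : ℝ → ℂ := fun u => ∫ s in a..u, g s with hF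
  filter_upwards [(vitaliFamily (volume : Measure ℝ) 1).ae_tendsto_average
    hg.locallyIntegrable] with x hx
  have hR : Tendsto (fun y => ⨍ s in Icc x y, g s) (𝓝[>] x) (𝓝 (g x)) :=
    hx.comp (Real.tendsto_Icc_vitaliFamily_right x)
  have hL : Tendsto (fun y => ⨍ s in Icc y x, g s) (𝓝[<] x) (𝓝 (g x)) :=
    hx.comp (Real.tendsto_Icc_vitaliFamily_left x)
  rw [hasDerivAt_iff_tendsto_slope, ← nhdsLT_sup_nhdsGT, tendsto_sup]
  constructor
  · apply Tendsto.congr' _ hL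
    filter_upwards [self_mem_nhdsWithin] with y (hy : y < x)
    have hxy : (0:ℝ) < x - y := sub_pos.2 hy
    have key : ⨍ s in Icc y x, g s = (x - y)⁻¹ • (F x - F y) := by
      rw [setAverage_eq, Real.volume_real_Icc_of_le hy.le,
        integral_Icc_eq_integral_Ioc, ← intervalIntegral.integral_of_le hy.le,
        ← intervalIntegral.integral_interval_sub_left
          (hg.intervalIntegrable : IntervalIntegrable g volume a x)
          (hg.intervalIntegrable : IntervalIntegrable g volume a y)]
    rw [key, slope_def_module]
    have h1 : (y - x)⁻¹ = -(x - y)⁻¹ := by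
      rw [show y - x = -(x - y) from by ring]
      exact neg_inv.symm
    rw [h1, neg_smul, ← smul_neg, neg_sub]
  · apply Tendsto.congr' _ hR
    filter_upwards [self_mem_nhdsWithin] with y (hy : x < y)
    have hxy : (0:ℝ) < y - x := sub_pos.2 hy
    have key : ⨍ s in Icc x y, g s = (y - x)⁻¹ • (F y - F x) := by
      rw [setAverage_eq, Real.volume_real_Icc_of_le hy.le,
        integral_Icc_eq_integral_Ioc, ← intervalIntegral.integral_of_le hy.le,
        ← intervalIntegral.integral_interval_sub_left
          (hg.intervalIntegrable : IntervalIntegrable g volume a y)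
          (hg.intervalIntegrable : IntervalIntegrable g volume a x)]
    rw [key, slope_def_module]

theorem derivWithin_ae (hab : a < b) {g f : ℝ → ℂ} (hgint : IntegrableOn g (Icc a b))
    (hf : ∀ t ∈ Icc a b, f t = f a + ∫ s in a..t, g s) :
    ∀ᵐ t ∂(volume.restrict (Icc a b)), derivWithin f (Icc a b) t = g t := by
  set g₀ : ℝ → ℂ := (Icc a b).indicator g with hg₀def
  have hg₀ : Integrable g₀ volume := (integrable_indicator_iff measurableSet_Icc).2 hgint
  have h1 : ∀ᵐ t ∂volume.restrict (Icc a b),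
      HasDerivAt (fun u => ∫ s in a..u, g₀ s) (g₀ t) t :=
    ae_restrict_of_ae (ae_hasDerivAt_primitive hg₀ a)
  have h2 : ∀ᵐ t ∂volume.restrict (Icc a b), t ≠ a ∧ t ≠ b := by
    have hnull : volume.restrict (Icc a b) ({a, b} : Set ℝ) = 0 := by
      have h0 : volume ({a, b} : Set ℝ) = 0 :=
        measure_union_null (measure_singleton a) (measure_singleton b)
      exact le_antisymm ((Measure.restrict_apply_le _ _).trans h0.le) zero_le
    refine (ae_iff).2 (measure_mono_null ?_ hnull)
    intro t ht
    simp only [mem_setOf_eq, not_and_or, not_not] at ht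
    rcases ht with h | h <;> simp [h]
  have hFeq : ∀ u ∈ Icc a b, f u = f a + ∫ s in a..u, g₀ s := by
    intro u hu
    rw [hf u hu]
    congr 1
    apply intervalIntegral.integral_congr
    intro s hs
    have hs' : s ∈ Icc a b := uIcc_subset_Icc ⟨le_refl a, hab.le⟩ hu hs
    rw [hg₀def, Set.indicator_of_mem hs']
  filter_upwards [h1, ae_restrict_mem measurableSet_Icc, h2] with t hD htIcc hne
  have hDW : HasDerivWithinAt f (g₀ t) (Icc a b) t := by
    have h3 : HasDerivWithinAt (fun u => f a + ∫ s in a..u, g₀ s) (g₀ t) (Icc a b) t :=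
      (hD.hasDerivWithinAt).const_add (f a)
    exact h3.congr (fun u hu => hFeq u hu) (hFeq t htIcc)
  rw [hg₀def, Set.indicator_of_mem htIcc] at hDW
  exact hDW.derivWithin (uniqueDiffOn_Icc hab t htIcc)

theorem derivWithin_eq_of_cont (hab : a < b) {g f : ℝ → ℂ} (hgint : IntegrableOn g (Icc a b))
    (hgc : ContinuousOn g (Icc a b)) (hf : ∀ t ∈ Icc a b, f t = f a + ∫ s in a..t, g s) :
    ∀ t ∈ Icc a b, derivWithin f (Icc a b) t = g t := by
  set g₀ : ℝ → ℂ := (Icc a b).indicator g with hg₀def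
  have hg₀ : Integrable g₀ volume := (integrable_indicator_iff measurableSet_Icc).2 hgint
  have hg₀c : ContinuousOn g₀ (Icc a b) :=
    hgc.congr (fun s hs => by rw [hg₀def, Set.indicator_of_mem hs])
  have hg₀m : AEStronglyMeasurable g₀ (volume.restrict (Icc a b)) :=
    hg₀c.aestronglyMeasurable measurableSet_Icc
  have hFeq : ∀ u ∈ Icc a b, f u = f a + ∫ s in a..u, g₀ s := by
    intro u hu
    rw [hf u hu]
    congr 1
    apply intervalIntegral.integral_congr
    intro s hs
    have hs' : s ∈ Icc a b := uIcc_subset_Icc ⟨le_refl a, hab.le⟩ hu hs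
    rw [hg₀def, Set.indicator_of_mem hs']
  intro t ht
  have hmain : HasDerivWithinAt (fun u => ∫ s in a..u, g₀ s) (g₀ t) (Icc a b) t := by
    rcases eq_or_lt_of_le ht.2 with hb | hb
    · -- t = b
      subst hb
      have hmem : Icc a t ∈ 𝓝[Iic t] t := Icc_mem_nhdsLE_of_mem ⟨hab, le_refl t⟩
      have hcw : ContinuousWithinAt g₀ (Iic t) t := (hg₀c t ht).mono_of_mem_nhdsWithin hmem
      have hh := intervalIntegral.integral_hasDerivWithinAt_right
        (hg₀.intervalIntegrable : IntervalIntegrable g₀ volume a t)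
        ⟨Icc a t, hmem, hg₀m.mono_set (Icc_subset_Icc_right (le_refl t))⟩ hcw
        (s := Iic t) (t := Iic t)
      exact hh.mono Icc_subset_Iic_self
    · rcases eq_or_lt_of_le ht.1 with ha | ha
      · -- t = a
        have ha' : a = t := ha
        subst ha'
        have hmem : Icc a b ∈ 𝓝[Ioi a] a := Icc_mem_nhdsGT_of_mem ⟨le_refl a, hab⟩
        have hcw : ContinuousWithinAt g₀ (Ioi a) a := (hg₀c a ht).mono_of_mem_nhdsWithin hmem
        have hh := intervalIntegral.integral_hasDerivWithinAt_right
          (hg₀.intervalIntegrable : IntervalIntegrable g₀ volume a a)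
          ⟨Icc a b, hmem, hg₀m⟩ hcw (s := Ici a) (t := Ioi a)
        exact hh.mono Icc_subset_Ici_self
      · -- interior
        have hmem : Icc a b ∈ 𝓝 t := Icc_mem_nhds ha hb
        have hca : ContinuousAt g₀ t := (hg₀c t ht).continuousAt hmem
        have hh := intervalIntegral.integral_hasDerivAt_right
          (hg₀.intervalIntegrable : IntervalIntegrable g₀ volume a t)
          ⟨Icc a b, hmem, hg₀m⟩ hca
        exact hh.hasDerivWithinAt
  have hDW : HasDerivWithinAt f (g₀ t) (Icc a b) t :=
    ((hmain.const_add (f a)).congr (fun u hu => hFeq u hu) (hFeq t ht))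
  rw [hDW.derivWithin (uniqueDiffOn_Icc hab t ht), hg₀def, Set.indicator_of_mem ht]

section MatrixLayer
open Matrix
variable {m : ℕ}

theorem det_expand (M : Matrix (Fin m) (Fin m) ℂ) :
    M.det = ∑ σ : Equiv.Perm (Fin m), ((Equiv.Perm.sign σ : ℤ) : ℂ) * ∏ i, M (σ i) i := by
  rw [Matrix.det_apply]
  apply Finset.sum_congr rfl
  intro σ _
  rw [Units.smul_def, zsmul_eq_mul]

theorem memW_det (hab : a ≤ b) (hp : 1 ≤ p) {k : ℕ} {M : ℝ → Matrix (Fin m) (Fin m) ℂ}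
    (hM : ∀ i j, MemW p a b (k + 1) (fun t => M t i j)) :
    MemW p a b (k + 1) (fun t => (M t).det) :=
  memW_congr hab (fun t _ => det_expand (M t))
    (memW_sum hab hp Finset.univ _ (fun σ _ => memW_const_mul _ _
      (memW_prod hab hp Finset.univ _ (fun i _ => hM (σ i) i))))

theorem memW_adjugate (hab : a ≤ b) (hp : 1 ≤ p) {k : ℕ} {M : ℝ → Matrix (Fin m) (Fin m) ℂ}
    (hM : ∀ i j, MemW p a b (k + 1) (fun t => M t i j)) (i j : Fin m) :
    MemW p a b (k + 1) (fun t => (M t).adjugate i j) := by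
  have hN : ∀ i' j', MemW p a b (k + 1)
      (fun t => ((M t).updateRow j (Pi.single i 1)) i' j') := by
    intro i' j'
    by_cases hij : i' = j
    · refine memW_congr hab (fun t _ => ?_) (memW_const ((Pi.single i (1:ℂ) : Fin m → ℂ) j') (k + 1))
      rw [Matrix.updateRow_apply, if_pos hij]
    · refine memW_congr hab (fun t _ => ?_) (hM i' j')
      rw [Matrix.updateRow_apply, if_neg hij]
  exact memW_congr hab (fun t _ => by rw [Matrix.adjugate_apply]) (memW_det hab hp hN)

theorem inv_entry (M : Matrix (Fin m) (Fin m) ℂ) (i j : Fin m) :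
    M⁻¹ i j = (M.det)⁻¹ * M.adjugate i j := by
  rw [Matrix.inv_def, Matrix.smul_apply, Ring.inverse_eq_inv, smul_eq_mul]

theorem memW_matinv (hab : a ≤ b) (hp : 1 ≤ p) {k : ℕ} {M : ℝ → Matrix (Fin m) (Fin m) ℂ}
    (hM : ∀ i j, MemW p a b (k + 1) (fun t => M t i j))
    (hdet : ∀ t ∈ Icc a b, (M t).det ≠ 0) (i j : Fin m) :
    MemW p a b (k + 1) (fun t => (M t)⁻¹ i j) := by
  refine memW_congr hab (fun t _ => inv_entry (M t) i j) ?_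
  exact memW_mul hab hp k (memW_inv hab hp k (memW_det hab hp hM) hdet)
    (memW_adjugate hab hp hM i j)

end MatrixLayer


end Helpers

theorem stmt7 (p : ℝ≥0∞) (a b : ℝ) (hab : a < b) (hp : 1 ≤ p) (n m : ℕ) (hn : 1 ≤ n)
    (Y : ℝ → Matrix (Fin m) (Fin m) ℂ)
    (hY : ∀ i j, MemW p a b n (fun t => Y t i j))
    (hYa : Y a = 1) (hdet : ∀ t ∈ Icc a b, (Y t).det ≠ 0) :
    (∀ i j, MemW p a b (n - 1) (fun t => (-(matDeriv a b Y t * (Y t)⁻¹)) i j)) ∧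
    IsMatricant a b (fun t => -(matDeriv a b Y t * (Y t)⁻¹)) Y ∧
    ∀ Z, IsMatricant a b (fun t => -(matDeriv a b Y t * (Y t)⁻¹)) Z →
      ∀ t ∈ Icc a b, Z t = Y t := by
  obtain ⟨k, rfl⟩ : ∃ k, n = k + 1 := ⟨n - 1, (Nat.succ_pred_eq_of_pos hn).symm⟩
  rw [Nat.add_sub_cancel]
  have hab' : a ≤ b := hab.le
  have haIcc : a ∈ Icc a b := ⟨le_refl a, hab'⟩
  have hYc : ∀ i j, ContinuousOn (fun t => Y t i j) (Icc a b) := fun i j =>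
    memW_continuousOn hab' hp (hY i j)
  have hinvW : ∀ i j, MemW p a b (k + 1) (fun t => (Y t)⁻¹ i j) :=
    memW_matinv hab' hp hY hdet
  have hinvc : ∀ i j, ContinuousOn (fun t => (Y t)⁻¹ i j) (Icc a b) := fun i j =>
    memW_continuousOn hab' hp (hinvW i j)
  choose g hgrep hgW using fun i j => memW_succ.1 (hY i j)
  have hgint : ∀ i j, IntegrableOn (g i j) (Icc a b) := fun i j =>
    memW_integrableOn hp (memW_mono hab' hp (Nat.zero_le k) (hgW i j))
  have hDae : ∀ i j, ∀ᵐ t ∂volume.restrict (Icc a b),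
      derivWithin (fun s => Y s i j) (Icc a b) t = g i j t := fun i j =>
    derivWithin_ae hab (hgint i j) (hgrep i j)
  have hAentry : ∀ (t : ℝ) (i j : Fin m), (-(matDeriv a b Y t * (Y t)⁻¹)) i j
      = -∑ l, derivWithin (fun s => Y s i l) (Icc a b) t * (Y t)⁻¹ l j := by
    intro t i j
    rw [Matrix.neg_apply, Matrix.mul_apply]
    rfl
  -- Part 1
  have part1 : ∀ i j, MemW p a b k (fun t => (-(matDeriv a b Y t * (Y t)⁻¹)) i j) := by
    intro i j
    have φW : MemW p a b k (fun t => -∑ l, g i l t * (Y t)⁻¹ l j) := by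
      refine memW_neg k (memW_sum hab' hp Finset.univ _ (fun l _ => ?_))
      cases k with
      | zero => exact memW_zero_mul_cont (hgW i l) (hinvc l j)
      | succ k' => exact memW_mul hab' hp k' (hgW i l) (memW_of_succ hab' hp (k' + 1) (hinvW l j))
    cases k with
    | zero =>
      rw [memW_zero] at φW ⊢
      refine (memLp_congr_ae ?_).2 φW
      have hall : ∀ᵐ t ∂volume.restrict (Icc a b),
          ∀ l, derivWithin (fun s => Y s i l) (Icc a b) t = g i l t :=
        (MeasureTheory.ae_all_iff).2 fun l => hDae i l
      filter_upwards [hall] with t htl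
      rw [hAentry t i j]
      congr 1
      exact Finset.sum_congr rfl fun l _ => by rw [htl l]
    | succ k' =>
      refine memW_congr hab' (fun t ht => ?_) φW
      rw [hAentry t i j]
      congr 1
      refine Finset.sum_congr rfl fun l _ => ?_
      rw [derivWithin_eq_of_cont hab (hgint i l) (memW_continuousOn hab' hp (hgW i l))
        (hgrep i l) t ht]
  -- integral identity for Y
  have hYint : ∀ i j, ∀ t ∈ Icc a b, Y t i j = (1 : Matrix (Fin m) (Fin m) ℂ) i j
      - ∫ s in a..t, ((-(matDeriv a b Y s * (Y s)⁻¹)) * Y s) i j := by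
    intro i j t ht
    have h1 : ∫ s in a..t, ((-(matDeriv a b Y s * (Y s)⁻¹)) * Y s) i j
        = ∫ s in a..t, -(derivWithin (fun u => Y u i j) (Icc a b) s) := by
      apply intervalIntegral.integral_congr
      intro s hs
      rw [uIcc_of_le ht.1] at hs
      have hs' : s ∈ Icc a b := Icc_subset_Icc_right ht.2 hs
      have hunit : IsUnit (Y s).det := isUnit_iff_ne_zero.2 (hdet s hs')
      show ((-(matDeriv a b Y s * (Y s)⁻¹)) * Y s) i j
        = -(derivWithin (fun u => Y u i j) (Icc a b) s)
      rw [Matrix.neg_mul, Matrix.mul_assoc, Matrix.nonsing_inv_mul _ hunit, Matrix.mul_one,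
        Matrix.neg_apply]
      rfl
    have h2 : ∫ s in a..t, derivWithin (fun u => Y u i j) (Icc a b) s
        = ∫ s in a..t, g i j s := by
      rw [intervalIntegral.integral_of_le ht.1, intervalIntegral.integral_of_le ht.1]
      apply integral_congr_ae
      exact ae_restrict_of_ae_restrict_of_subset
        (Ioc_subset_Icc_self.trans (Icc_subset_Icc_right ht.2)) (hDae i j)
    rw [h1, intervalIntegral.integral_neg, h2, sub_neg_eq_add,
      show (1 : Matrix (Fin m) (Fin m) ℂ) i j = Y a i j from by rw [hYa], ← hgrep i j t ht]
  have part2 : IsMatricant a b (fun t => -(matDeriv a b Y t * (Y t)⁻¹)) Y :=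
    ⟨hYc, hYa, fun i j t ht => hYint i j t ht⟩
  refine ⟨part1, part2, ?_⟩
  -- Part 3: uniqueness
  intro Z hZ t ht
  obtain ⟨hZc, hZa, hZeq⟩ := hZ
  have hAint : ∀ i j,
      IntegrableOn (fun s => (-(matDeriv a b Y s * (Y s)⁻¹)) i j) (Icc a b) :=
    fun i j => memW_integrableOn hp (memW_mono hab' hp (Nat.zero_le k) (part1 i j))
  have hDc : ∀ i j, ContinuousOn (fun s => Z s i j - Y s i j) (Icc a b) :=
    fun i j => (hZc i j).sub (hYc i j)
  have hAM : ∀ (M : ℝ → Matrix (Fin m) (Fin m) ℂ),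
      (∀ i j, ContinuousOn (fun s => M s i j) (Icc a b)) → ∀ i j, ∀ u ∈ Icc a b,
      IntervalIntegrable
        (fun s => ((-(matDeriv a b Y s * (Y s)⁻¹)) * M s) i j) volume a u := by
    intro M hMc i j u hu
    have heq : (fun s => ((-(matDeriv a b Y s * (Y s)⁻¹)) * M s) i j)
        = fun s => ∑ l, (-(matDeriv a b Y s * (Y s)⁻¹)) i l * M s l j := by
      funext s
      rw [Matrix.mul_apply]
    rw [heq]
    apply integrableOn_intervalIntegrable _ haIcc hu
    apply MeasureTheory.integrable_finset_sum
    intro l _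
    exact IntegrableOn.mul_contOn (hAint i l) (hMc l j)
  have hDmc : ∀ i j, ContinuousOn (fun s => (Z s - Y s) i j) (Icc a b) := by
    intro i j
    have := hDc i j
    simpa [Matrix.sub_apply] using this
  -- integral identity for the difference
  have hDid : ∀ i j, ∀ u ∈ Icc a b, Z u i j - Y u i j
      = -∫ s in a..u, ((-(matDeriv a b Y s * (Y s)⁻¹)) * (Z s - Y s)) i j := by
    intro i j u hu
    have e1 := hZeq i j u hu
    have e2 := hYint i j u hu
    have hsplit : ∫ s in a..u, ((-(matDeriv a b Y s * (Y s)⁻¹)) * (Z s - Y s)) i j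
        = (∫ s in a..u, ((-(matDeriv a b Y s * (Y s)⁻¹)) * Z s) i j)
          - ∫ s in a..u, ((-(matDeriv a b Y s * (Y s)⁻¹)) * Y s) i j := by
      rw [← intervalIntegral.integral_sub (hAM Z hZc i j u hu) (hAM Y hYc i j u hu)]
      apply intervalIntegral.integral_congr
      intro s _
      show ((-(matDeriv a b Y s * (Y s)⁻¹)) * (Z s - Y s)) i j
        = ((-(matDeriv a b Y s * (Y s)⁻¹)) * Z s) i j
          - ((-(matDeriv a b Y s * (Y s)⁻¹)) * Y s) i j
      rw [Matrix.mul_sub, Matrix.sub_apply]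
    rw [hsplit, e1, e2]
    ring
  -- Gronwall setup
  set A : ℝ → Matrix (Fin m) (Fin m) ℂ := fun s => -(matDeriv a b Y s * (Y s)⁻¹) with hA
  have hψc : ContinuousOn (fun s => ∑ i, ∑ j, ‖Z s i j - Y s i j‖) (Icc a b) := by
    apply continuousOn_finset_sum
    intro i _
    apply continuousOn_finset_sum
    intro j _
    exact (hDc i j).norm
  have hwint : IntegrableOn (fun s => ∑ i, ∑ l, ‖A s i l‖) (Icc a b) := by
    apply MeasureTheory.integrable_finset_sum
    intro i _
    apply MeasureTheory.integrable_finset_sum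
    intro l _
    exact (hAint i l).norm
  have hψ0 : ∀ u ∈ Icc a b, 0 ≤ ∑ i, ∑ j, ‖Z u i j - Y u i j‖ := fun u _ =>
    Finset.sum_nonneg fun i _ => Finset.sum_nonneg fun j _ => norm_nonneg _
  have hw0 : ∀ s, 0 ≤ ∑ i, ∑ l, ‖A s i l‖ := fun s =>
    Finset.sum_nonneg fun i _ => Finset.sum_nonneg fun l _ => norm_nonneg _
  have hle : ∀ u ∈ Icc a b, (∑ i, ∑ j, ‖Z u i j - Y u i j‖)
      ≤ ∫ s in a..u, (∑ i, ∑ l, ‖A s i l‖) * (∑ i, ∑ j, ‖Z s i j - Y s i j‖) := by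
    intro u hu
    have hXint : ∀ i j, IntegrableOn
        (fun s => ∑ l, ‖A s i l‖ * ‖Z s l j - Y s l j‖) (Icc a b) := by
      intro i j
      apply MeasureTheory.integrable_finset_sum
      intro l _
      exact IntegrableOn.mul_contOn ((hAint i l).norm) ((hDc l j).norm)
    calc (∑ i, ∑ j, ‖Z u i j - Y u i j‖)
        = ∑ i, ∑ j, ‖∫ s in a..u, (A s * (Z s - Y s)) i j‖ := by
          refine Finset.sum_congr rfl fun i _ => Finset.sum_congr rfl fun j _ => ?_
          rw [hDid i j u hu, norm_neg]
      _ ≤ ∑ i, ∑ j, ∫ s in a..u, ‖(A s * (Z s - Y s)) i j‖ := by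
          refine Finset.sum_le_sum fun i _ => Finset.sum_le_sum fun j _ => ?_
          exact intervalIntegral.norm_integral_le_integral_norm hu.1
      _ ≤ ∑ i, ∑ j, ∫ s in a..u, (∑ l, ‖A s i l‖ * ‖Z s l j - Y s l j‖) := by
          refine Finset.sum_le_sum fun i _ => Finset.sum_le_sum fun j _ => ?_
          refine intervalIntegral.integral_mono_on hu.1 ((hAM _ hDmc i j u hu).norm)
            (integrableOn_intervalIntegrable (hXint i j) haIcc hu) ?_
          intro s _
          calc ‖(A s * (Z s - Y s)) i j‖
              = ‖∑ l, A s i l * (Z s l j - Y s l j)‖ := by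
                rw [Matrix.mul_apply]
                simp [Matrix.sub_apply]
            _ ≤ ∑ l, ‖A s i l * (Z s l j - Y s l j)‖ := norm_sum_le _ _
            _ = ∑ l, ‖A s i l‖ * ‖Z s l j - Y s l j‖ :=
                Finset.sum_congr rfl fun l _ => norm_mul _ _
      _ = ∫ s in a..u, (∑ i, ∑ j, ∑ l, ‖A s i l‖ * ‖Z s l j - Y s l j‖) := by
          have hin : ∀ i j : Fin m, IntervalIntegrable
              (fun s => ∑ l, ‖A s i l‖ * ‖Z s l j - Y s l j‖) volume a u :=
            fun i j => integrableOn_intervalIntegrable (hXint i j) haIcc hu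
          have hin2 : ∀ i : Fin m, IntervalIntegrable
              (fun s => ∑ j, ∑ l, ‖A s i l‖ * ‖Z s l j - Y s l j‖) volume a u := fun i =>
            integrableOn_intervalIntegrable
              (MeasureTheory.integrable_finset_sum _ (fun j _ => hXint i j)) haIcc hu
          rw [intervalIntegral.integral_finset_sum (fun i _ => hin2 i)]
          refine Finset.sum_congr rfl fun i _ => ?_
          rw [intervalIntegral.integral_finset_sum (fun j _ => hin i j)]
      _ ≤ ∫ s in a..u, (∑ i, ∑ l, ‖A s i l‖) * (∑ i, ∑ j, ‖Z s i j - Y s i j‖) := by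
          refine intervalIntegral.integral_mono_on hu.1 ?_ ?_ ?_
          · apply integrableOn_intervalIntegrable _ haIcc hu
            apply MeasureTheory.integrable_finset_sum
            intro i _
            apply MeasureTheory.integrable_finset_sum
            intro j _
            exact hXint i j
          · exact integrableOn_intervalIntegrable (IntegrableOn.mul_contOn hwint hψc) haIcc hu
          · intro s _
            rw [Finset.sum_mul]
            refine Finset.sum_le_sum fun i _ => ?_
            rw [Finset.sum_mul, Finset.sum_comm]
            refine Finset.sum_le_sum fun l _ => ?_
            rw [← Finset.mul_sum]
            refine mul_le_mul_of_nonneg_left ?_ (norm_nonneg _)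
            exact Finset.single_le_sum (f := fun l' => ∑ j, ‖Z s l' j - Y s l' j‖)
              (fun l' _ => Finset.sum_nonneg fun j _ => norm_nonneg _) (Finset.mem_univ l)
  have hzero := gronwall hab' hψc hψ0 hwint hw0 hle t ht
  have hentry : ∀ i j, Z t i j = Y t i j := by
    intro i j
    have h1 : ∀ i ∈ Finset.univ, (0:ℝ) ≤ ∑ j, ‖Z t i j - Y t i j‖ :=
      fun i _ => Finset.sum_nonneg fun j _ => norm_nonneg _
    have h2 := (Finset.sum_eq_zero_iff_of_nonneg h1).1 hzero i (Finset.mem_univ i)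
    have h3 := (Finset.sum_eq_zero_iff_of_nonneg
      (fun j _ => norm_nonneg _)).1 h2 j (Finset.mem_univ j)
    have h4 : Z t i j - Y t i j = 0 := norm_eq_zero.1 h3
    exact sub_eq_zero.1 h4
  exact Matrix.ext hentry
end
end
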